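/- arXiv:1912.03244 — 6 statements merged into one kernel-verified Lean document; each statement's English description precedes it below -/
import Mathlib

section
/- Let Ω be a finite nonempty set and let μ, ν be probability measures on Ω with μ(ω) > 0 and ν(ω) > 0 for every ω ∈ Ω. Set ρ = max_{ω∈Ω} max{ μ(ω)/ν(ω), ν(ω)/μ(ω) }. Then ∑_{ω∈Ω} √(μ(ω)ν(ω)) ≥ 1 − (1/2)(√ρ − 1)². -/
open Finset

private lemma hell_aux (a b ρ : ℝ) (ha : 0 < a) (hb : 0 < b)
    (h1 : a / b ≤ ρ) (h2 : b / a ≤ ρ) :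
    (Real.sqrt a - Real.sqrt b) ^ 2 ≤ (Real.sqrt ρ - 1) ^ 2 * ((a + b) / 2) := by
  have key : ∀ x y : ℝ, 0 < x → 0 < y → x ≤ y → y / x ≤ ρ →
      (Real.sqrt x - Real.sqrt y) ^ 2 ≤ (Real.sqrt ρ - 1) ^ 2 * ((x + y) / 2) := by
    intro x y hx hy hxy hr
    have hρ1 : 1 ≤ ρ := le_trans (by rw [le_div_iff₀ hx]; linarith) hr
    have hsρ : 1 ≤ Real.sqrt ρ := by
      rw [show (1:ℝ) = Real.sqrt 1 by simp]; exact Real.sqrt_le_sqrt hρ1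
    have hyx : y ≤ ρ * x := by rw [div_le_iff₀ hx] at hr; exact hr
    have hsy : Real.sqrt y ≤ Real.sqrt ρ * Real.sqrt x := by
      rw [← Real.sqrt_mul (by linarith)]
      exact Real.sqrt_le_sqrt hyx
    have h0 : 0 ≤ Real.sqrt y - Real.sqrt x :=
      sub_nonneg.2 (Real.sqrt_le_sqrt hxy)
    have h1' : Real.sqrt y - Real.sqrt x ≤ (Real.sqrt ρ - 1) * Real.sqrt x := by
      nlinarith [Real.sqrt_nonneg x]
    have hsq : (Real.sqrt y - Real.sqrt x) ^ 2 ≤ ((Real.sqrt ρ - 1) * Real.sqrt x) ^ 2 :=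
      pow_le_pow_left₀ h0 h1' 2
    have hxsq : Real.sqrt x ^ 2 = x := Real.sq_sqrt hx.le
    calc (Real.sqrt x - Real.sqrt y) ^ 2 = (Real.sqrt y - Real.sqrt x) ^ 2 := by ring
      _ ≤ ((Real.sqrt ρ - 1) * Real.sqrt x) ^ 2 := hsq
      _ = (Real.sqrt ρ - 1) ^ 2 * x := by rw [mul_pow, hxsq]
      _ ≤ (Real.sqrt ρ - 1) ^ 2 * ((x + y) / 2) := by
          apply mul_le_mul_of_nonneg_left (by linarith) (sq_nonneg _)
  rcases le_total a b with h | h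
  · exact key a b ha hb h h2
  · have := key b a hb ha h h1
    calc (Real.sqrt a - Real.sqrt b) ^ 2 = (Real.sqrt b - Real.sqrt a) ^ 2 := by ring
      _ ≤ (Real.sqrt ρ - 1) ^ 2 * ((b + a) / 2) := this
      _ = (Real.sqrt ρ - 1) ^ 2 * ((a + b) / 2) := by ring

/-- **Hellinger integral lower bound.**
Let `Ω` be a finite nonempty set and `μ, ν` probability measures on `Ω` with
`μ ω > 0` and `ν ω > 0` for every `ω`.  With
`ρ = max_{ω} max (μ ω / ν ω) (ν ω / μ ω)`, the Hellinger integral satisfies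
`∑ ω, √(μ ω * ν ω) ≥ 1 - (1/2) * (√ρ - 1)^2`. -/
theorem hellinger_lower_bound {Ω : Type*} [Fintype Ω] [Nonempty Ω]
    (μ ν : Ω → ℝ)
    (hμpos : ∀ ω, 0 < μ ω) (hνpos : ∀ ω, 0 < ν ω)
    (hμsum : ∑ ω, μ ω = 1) (hνsum : ∑ ω, ν ω = 1)
    (ρ : ℝ)
    (hρ : ρ = (Finset.univ : Finset Ω).sup' Finset.univ_nonempty
      (fun ω => max (μ ω / ν ω) (ν ω / μ ω))) :
    1 - (1 / 2) * (Real.sqrt ρ - 1) ^ 2 ≤ ∑ ω, Real.sqrt (μ ω * ν ω) := by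
  have hρ1 : ∀ ω : Ω, μ ω / ν ω ≤ ρ := fun ω => by
    rw [hρ]
    exact le_trans (le_max_left _ _) (Finset.le_sup' (fun ω => max (μ ω / ν ω) (ν ω / μ ω)) (Finset.mem_univ ω))
  have hρ2 : ∀ ω : Ω, ν ω / μ ω ≤ ρ := fun ω => by
    rw [hρ]
    exact le_trans (le_max_right _ _) (Finset.le_sup' (fun ω => max (μ ω / ν ω) (ν ω / μ ω)) (Finset.mem_univ ω))
  have hbound : ∑ ω, (Real.sqrt (μ ω) - Real.sqrt (ν ω)) ^ 2 ≤ (Real.sqrt ρ - 1) ^ 2 := by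
    calc ∑ ω, (Real.sqrt (μ ω) - Real.sqrt (ν ω)) ^ 2
        ≤ ∑ ω, (Real.sqrt ρ - 1) ^ 2 * ((μ ω + ν ω) / 2) :=
          Finset.sum_le_sum fun ω _ =>
            hell_aux _ _ _ (hμpos ω) (hνpos ω) (hρ1 ω) (hρ2 ω)
      _ = (Real.sqrt ρ - 1) ^ 2 := by
          rw [← Finset.mul_sum]
          have : ∑ ω, (μ ω + ν ω) / 2 = 1 := by
            rw [← Finset.sum_div, Finset.sum_add_distrib, hμsum, hνsum]; norm_num
          rw [this, mul_one]
  have hexp : ∑ ω, (Real.sqrt (μ ω) - Real.sqrt (ν ω)) ^ 2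
      = 2 - 2 * ∑ ω, Real.sqrt (μ ω * ν ω) := by
    have : ∀ ω : Ω, (Real.sqrt (μ ω) - Real.sqrt (ν ω)) ^ 2
        = μ ω + ν ω - 2 * Real.sqrt (μ ω * ν ω) := by
      intro ω
      rw [Real.sqrt_mul (hμpos ω).le]
      nlinarith [Real.sq_sqrt (hμpos ω).le, Real.sq_sqrt (hνpos ω).le]
    rw [Finset.sum_congr rfl fun ω _ => this ω]
    rw [Finset.sum_sub_distrib, Finset.sum_add_distrib, hμsum, hνsum, ← Finset.mul_sum]
    ring
  linarith [hexp ▸ hbound]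
end

section
/- Given any real λ with 1 < λ < (√2 + 1)², there exists K > 0 such that for every n ≥ 1 and all reals ρ_1, …, ρ_n with 1 ≤ ρ_i ≤ λ for each i, one has ∏_{i=1}^{n} ( 1 − (1/2)(√ρ_i − 1)² )² ≥ 1 − ∑_{i=1}^{n} ( (log ρ_i)²/4 + K (log ρ_i)³ ). -/
open Real Finset

/-- Weierstrass-type product inequality. -/
lemma aux_prod_ineq (s : Finset ℕ) (f : ℕ → ℝ)
    (h : ∀ i ∈ s, 0 ≤ f i ∧ f i ≤ 1) :
    1 - ∑ i ∈ s, f i ≤ ∏ i ∈ s, (1 - f i) := by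
  induction s using Finset.cons_induction with
  | empty => simp
  | cons a s ha ih =>
    rw [Finset.sum_cons, Finset.prod_cons]
    have hf := h a (Finset.mem_cons_self a s)
    have ih' := ih (fun i hi => h i (Finset.mem_cons_of_mem hi))
    have hprod : 0 ≤ ∏ i ∈ s, (1 - f i) :=
      Finset.prod_nonneg fun i hi => by linarith [(h i (Finset.mem_cons_of_mem hi)).2]
    have hprod1 : ∏ i ∈ s, (1 - f i) ≤ 1 :=
      Finset.prod_le_one (fun i hi => by linarith [(h i (Finset.mem_cons_of_mem hi)).2])
        (fun i hi => by linarith [(h i (Finset.mem_cons_of_mem hi)).1])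
    nlinarith [hf.1, hf.2]

/-- Pointwise inequality. -/
lemma aux_pointwise {lam ρ : ℝ} (h1 : 1 ≤ ρ) (h2 : ρ ≤ lam) :
    1 - (1 - (1 / 2) * (Real.sqrt ρ - 1) ^ 2) ^ 2 ≤
      (Real.log ρ) ^ 2 / 4 +
        (Real.sqrt lam * (Real.sqrt lam + 1) / 8) * (Real.log ρ) ^ 3 := by
  set t := Real.sqrt ρ - 1 with htdef
  set L := Real.log ρ / 2 with hLdef
  have hρ0 : (0:ℝ) < ρ := by linarith
  have hsρ : 1 ≤ Real.sqrt ρ := by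
    rw [show (1:ℝ) = Real.sqrt 1 by simp]; exact Real.sqrt_le_sqrt h1
  have hslam : Real.sqrt ρ ≤ Real.sqrt lam := Real.sqrt_le_sqrt h2
  have ht0 : 0 ≤ t := by linarith
  have hLs : L = Real.log (Real.sqrt ρ) := by rw [Real.log_sqrt hρ0.le]
  have hL0 : 0 ≤ L := by
    rw [hLs]; exact Real.log_nonneg hsρ
  -- t ≤ L * (1 + t) : from log x ≥ 1 - 1/x
  have hkey : t ≤ L * (1 + t) := by
    have hx : (0:ℝ) < (Real.sqrt ρ)⁻¹ := by positivity
    have := Real.log_le_sub_one_of_pos hx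
    rw [Real.log_inv] at this
    have h1t : 1 + t = Real.sqrt ρ := by simp [htdef]
    rw [h1t, hLs]
    have hs0 : (0:ℝ) < Real.sqrt ρ := by linarith
    have : Real.sqrt ρ - Real.sqrt ρ * (Real.sqrt ρ)⁻¹ ≤
        Real.log (Real.sqrt ρ) * Real.sqrt ρ := by
      nlinarith
    rw [mul_inv_cancel₀ hs0.ne'] at this
    nlinarith
  have h1t : 1 + t ≤ Real.sqrt lam := by simp [htdef]; linarith
  have hlog : Real.log ρ = 2 * L := by rw [hLdef]; ring
  rw [hlog]
  -- goal: 1 - (1 - t²/2)² ≤ L² + √λ(√λ+1) L³ (after ring)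
  have htL : t ≤ L * Real.sqrt lam := by nlinarith
  have ht2 : t + 2 ≤ Real.sqrt lam + 1 := by linarith
  have hmul : t * (t + 2) ≤ (L * Real.sqrt lam) * (Real.sqrt lam + 1) := by
    apply mul_le_mul htL ht2 (by linarith) (by nlinarith)
  nlinarith [sq_nonneg t, sq_nonneg (t - L), mul_nonneg hL0 hL0, sq_nonneg (t*t)]

/-- Given `1 < λ < (√2 + 1)²`, there is `K > 0` such that whenever
`1 ≤ ρ i ≤ λ` for `1 ≤ i ≤ n`,
`∏_{i=1}^n (1 - (1/2)(√(ρ i) - 1)²)² ≥ 1 - ∑_{i=1}^n ((log ρ i)²/4 + K (log ρ i)³)`. -/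
theorem prod_one_sub_half_sq_ge {lam : ℝ} (hlam1 : 1 < lam)
    (hlam2 : lam < (Real.sqrt 2 + 1) ^ 2) :
    ∃ K > (0 : ℝ), ∀ n : ℕ, 1 ≤ n → ∀ ρ : ℕ → ℝ,
      (∀ i, 1 ≤ i → i ≤ n → 1 ≤ ρ i ∧ ρ i ≤ lam) →
      1 - ∑ i ∈ Finset.Icc 1 n,
          ((Real.log (ρ i)) ^ 2 / 4 + K * (Real.log (ρ i)) ^ 3) ≤
        ∏ i ∈ Finset.Icc 1 n, (1 - (1 / 2) * (Real.sqrt (ρ i) - 1) ^ 2) ^ 2 := by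
  have hsl : 1 ≤ Real.sqrt lam := by
    rw [show (1:ℝ) = Real.sqrt 1 by simp]; exact Real.sqrt_le_sqrt hlam1.le
  refine ⟨Real.sqrt lam * (Real.sqrt lam + 1) / 8, by positivity, ?_⟩
  intro n hn ρ hρ
  -- bound √λ < √2 + 1
  have hsl2 : Real.sqrt lam < Real.sqrt 2 + 1 := by
    have h2 : (0:ℝ) ≤ Real.sqrt 2 + 1 := by positivity
    have := Real.sqrt_lt_sqrt (by linarith : (0:ℝ) ≤ lam) hlam2
    rwa [Real.sqrt_sq h2] at this
  set f : ℕ → ℝ := fun i => 1 - (1 - (1 / 2) * (Real.sqrt (ρ i) - 1) ^ 2) ^ 2 with hfdef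
  have hbound : ∀ i ∈ Finset.Icc 1 n, 0 ≤ f i ∧ f i ≤ 1 := by
    intro i hi
    rw [Finset.mem_Icc] at hi
    obtain ⟨h1, h2⟩ := hρ i hi.1 hi.2
    have hs1 : 1 ≤ Real.sqrt (ρ i) := by
      rw [show (1:ℝ) = Real.sqrt 1 by simp]; exact Real.sqrt_le_sqrt h1
    have hs2 : Real.sqrt (ρ i) ≤ Real.sqrt lam := Real.sqrt_le_sqrt h2
    have ht : Real.sqrt (ρ i) - 1 < Real.sqrt 2 := by linarith
    have ht0 : 0 ≤ Real.sqrt (ρ i) - 1 := by linarith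
    have hsq : (Real.sqrt (ρ i) - 1) ^ 2 < 2 := by
      have := Real.sq_sqrt (by norm_num : (0:ℝ) ≤ 2)
      nlinarith
    constructor
    · simp only [hfdef]; nlinarith
    · simp only [hfdef]; nlinarith
  calc 1 - ∑ i ∈ Finset.Icc 1 n,
          ((Real.log (ρ i)) ^ 2 / 4 +
            (Real.sqrt lam * (Real.sqrt lam + 1) / 8) * (Real.log (ρ i)) ^ 3)
      ≤ 1 - ∑ i ∈ Finset.Icc 1 n, f i := by
        have : ∑ i ∈ Finset.Icc 1 n, f i ≤ ∑ i ∈ Finset.Icc 1 n,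
            ((Real.log (ρ i)) ^ 2 / 4 +
              (Real.sqrt lam * (Real.sqrt lam + 1) / 8) * (Real.log (ρ i)) ^ 3) := by
          apply Finset.sum_le_sum
          intro i hi
          rw [Finset.mem_Icc] at hi
          obtain ⟨h1, h2⟩ := hρ i hi.1 hi.2
          exact aux_pointwise h1 h2
        linarith
    _ ≤ ∏ i ∈ Finset.Icc 1 n, (1 - f i) := aux_prod_ineq _ _ hbound
    _ = ∏ i ∈ Finset.Icc 1 n, (1 - (1 / 2) * (Real.sqrt (ρ i) - 1) ^ 2) ^ 2 := by
        apply Finset.prod_congr rfl; intro i _; simp [hfdef]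
end

section
/- Let g ∈ 𝒢 be positive and continuous, and let B = (b_n)_{n≥1} be a sequence of positive integers. Then for every n ≥ 1 such that ρ_{[0, B_{n−1}]}(g) ≤ (1+√2)², one has d_n(g,B) ≤ √( 1 − ∏_{i=B_{n−1}}^{B_n − 1} ( 1 − (1/2)(√ρ_{[0,i]}(g) − 1)² )² ). -/
open Filter Topology MeasureTheory

noncomputable section

/-- Prepend a symbol: `(cons s x) 0 = s` and `(cons s x) (i+1) = x i`. -/
def cons {S : Type*} (s : S) (x : ℕ → S) : ℕ → S := fun n =>
  match n with
  | 0 => s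
  | Nat.succ k => x k

/-- Membership in the class `𝒢`: `g` is a (bounded) Borel function with
`g ≥ 0` and `∑_{s ∈ S} g (s x) = 1` for every `x ∈ X₊ = S^{ℕ}`. -/
def MemG {S : Type*} [Fintype S] [MeasurableSpace S] (g : (ℕ → S) → ℝ) : Prop :=
  Measurable g ∧ (∀ x, 0 ≤ g x) ∧ ∀ x : ℕ → S, ∑ s : S, g (cons s x) = 1

/-- The left shift `T` on `X = S^{ℤ}`. -/
def shiftZ {S : Type*} (y : ℤ → S) : ℤ → S := fun i => y (i + 1)

/-- The natural extension `g̃ : S^{ℤ} → ℝ` of `g : S^{ℕ} → ℝ`. -/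
def gtilde {S : Type*} (g : (ℕ → S) → ℝ) (y : ℤ → S) : ℝ :=
  g fun n : ℕ => y (n : ℤ)

/-- Replace the coordinates of `x` in `[m, n]` by the configuration `ζ`. -/
def patch {S : Type*} (m n : ℤ) (ζ : {i : ℤ // i ∈ Finset.Icc m n} → S)
    (x : ℤ → S) : ℤ → S :=
  fun j => if h : j ∈ Finset.Icc m n then ζ ⟨j, h⟩ else x j

/-- `π^g_{[m,n]}([ζ] | x) = ∏_{i=m}^{n} g̃(T^i z)` where `z` agrees with `ζ` on
`[m,n]` and with `x` elsewhere. -/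
def piCond {S : Type*} (g : (ℕ → S) → ℝ) (m n : ℤ)
    (ζ : {i : ℤ // i ∈ Finset.Icc m n} → S) (x : ℤ → S) : ℝ :=
  ∏ i ∈ Finset.Icc m n, gtilde g (fun j => patch m n ζ x (j + i))

/-- Partial sums `B_n = b_1 + ⋯ + b_n` (with `B_0 = 0`). -/
def Bsum (b : ℕ → ℕ) (n : ℕ) : ℕ := ∑ k ∈ Finset.Icc 1 n, b k

/-- Left endpoint of `J_n = [1 - B_n, -B_{n-1}]`. -/
def Jlo (b : ℕ → ℕ) (n : ℕ) : ℤ := 1 - (Bsum b n : ℤ)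

/-- Right endpoint of `J_n = [1 - B_n, -B_{n-1}]`. -/
def Jhi (b : ℕ → ℕ) (n : ℕ) : ℤ := -(Bsum b (n - 1) : ℤ)

/-- `d_n(g,B) = sup { (1/2) ∑_{ζ ∈ S^{J_n}} |π^g_{J_n}([ζ]|x) - π^g_{J_n}([ζ]|y)| :
x_i = y_i for all i ∈ [1 - B_{n-1}, 0] }`. -/
def dSeq {S : Type*} [Fintype S] [DecidableEq S]
    (g : (ℕ → S) → ℝ) (b : ℕ → ℕ) (n : ℕ) : ℝ :=
  sSup {r : ℝ | ∃ x y : ℤ → S,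
    (∀ i : ℤ, 1 - (Bsum b (n - 1) : ℤ) ≤ i → i ≤ 0 → x i = y i) ∧
    r = (1 / 2) * ∑ ζ : {i : ℤ // i ∈ Finset.Icc (Jlo b n) (Jhi b n)} → S,
      |piCond g (Jlo b n) (Jhi b n) ζ x - piCond g (Jlo b n) (Jhi b n) ζ y|}

/-- `ρ_{[0,n]}(f) = sup { f x / f y : x_i = y_i for 0 ≤ i ≤ n }` (for `f` on `X₊`). -/
def rhoVar {S : Type*} (f : (ℕ → S) → ℝ) (n : ℕ) : ℝ :=
  sSup {r : ℝ | ∃ x y : ℕ → S, (∀ i ≤ n, x i = y i) ∧ r = f x / f y}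

lemma Icc_eq_insert (m n : ℤ) (h : m ≤ n) :
    Finset.Icc m n = insert m (Finset.Icc (m + 1) n) := by
  ext i
  simp only [Finset.mem_Icc, Finset.mem_insert]
  omega

lemma mem_Icc_of_succ {m n i : ℤ} (h : i ∈ Finset.Icc (m + 1) n) : i ∈ Finset.Icc m n := by
  simp only [Finset.mem_Icc] at *
  omega

def peelEquiv {S : Type*} [DecidableEq S] (m n : ℤ) (h : m ≤ n) :
    ({i : ℤ // i ∈ Finset.Icc m n} → S) ≃ S × ({i : ℤ // i ∈ Finset.Icc (m + 1) n} → S) where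
  toFun f := (f ⟨m, by simp [Finset.mem_Icc, h]⟩, fun i => f ⟨i.1, mem_Icc_of_succ i.2⟩)
  invFun p := fun i => if h' : i.1 ∈ Finset.Icc (m + 1) n then p.2 ⟨i.1, h'⟩ else p.1
  left_inv f := by
    funext i
    by_cases h' : i.1 ∈ Finset.Icc (m + 1) n
    · simp only [dif_pos h']
    · simp only [dif_neg h']
      have hi : i.1 = m := by
        have := i.2
        simp only [Finset.mem_Icc] at this h' ⊢
        omega
      exact congrArg f (Subtype.ext hi.symm)
  right_inv p := by
    refine Prod.ext ?_ ?_
    · have : (m : ℤ) ∉ Finset.Icc (m + 1) n := by simp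
      simp only [dif_neg this]
    · funext i
      simp only [dif_pos i.2]

lemma peelEquiv_symm_restrict {S : Type*} [DecidableEq S] (m n : ℤ) (h : m ≤ n)
    (s : S) (ζ' : {i : ℤ // i ∈ Finset.Icc (m + 1) n} → S) :
    (fun i : {i : ℤ // i ∈ Finset.Icc (m + 1) n} =>
      (peelEquiv m n h).symm (s, ζ') ⟨i.1, mem_Icc_of_succ i.2⟩) = ζ' := by
  funext i
  simp only [peelEquiv, Equiv.coe_fn_symm_mk, dif_pos i.2]

lemma patch_mem {S : Type*} (m n : ℤ) (ζ : {i : ℤ // i ∈ Finset.Icc m n} → S)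
    (x : ℤ → S) (j : ℤ) (h : j ∈ Finset.Icc m n) : patch m n ζ x j = ζ ⟨j, h⟩ := by
  unfold patch
  rw [dif_pos h]

lemma patch_not_mem {S : Type*} (m n : ℤ) (ζ : {i : ℤ // i ∈ Finset.Icc m n} → S)
    (x : ℤ → S) (j : ℤ) (h : j ∉ Finset.Icc m n) : patch m n ζ x j = x j := by
  unfold patch
  rw [dif_neg h]

lemma patch_agree {S : Type*} (m n : ℤ) (ζ : {i : ℤ // i ∈ Finset.Icc m n} → S)
    (x : ℤ → S) (j : ℤ) (hj : m + 1 ≤ j) :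
    patch m n ζ x j = patch (m + 1) n (fun i => ζ ⟨i.1, mem_Icc_of_succ i.2⟩) x j := by
  unfold patch
  by_cases h1 : j ∈ Finset.Icc (m + 1) n
  · rw [dif_pos h1, dif_pos (mem_Icc_of_succ h1)]
  · have h2 : j ∉ Finset.Icc m n := by
      simp only [Finset.mem_Icc] at h1 ⊢
      omega
    rw [dif_neg h1, dif_neg h2]

lemma prod_Icc_peel {M : Type*} [CommMonoid M] (F : ℤ → M) (m n : ℤ) (h : m ≤ n) :
    ∏ i ∈ Finset.Icc m n, F i = F m * ∏ i ∈ Finset.Icc (m + 1) n, F i := by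
  rw [Icc_eq_insert m n h, Finset.prod_insert (by simp [Finset.mem_Icc])]

lemma piCond_peel {S : Type*} (g : (ℕ → S) → ℝ) (m n : ℤ) (h : m ≤ n)
    (ζ : {i : ℤ // i ∈ Finset.Icc m n} → S) (x : ℤ → S) :
    piCond g m n ζ x = gtilde g (fun j => patch m n ζ x (j + m)) *
      piCond g (m + 1) n (fun i => ζ ⟨i.1, mem_Icc_of_succ i.2⟩) x := by
  unfold piCond
  rw [prod_Icc_peel _ m n h]
  congr 1
  apply Finset.prod_congr rfl
  intro i hi
  unfold gtilde
  congr 1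
  funext k
  apply patch_agree
  have : m + 1 ≤ i := (Finset.mem_Icc.mp hi).1
  omega

lemma gtilde_kernel_sum {S : Type*} [Fintype S] [Nonempty S] (g : (ℕ → S) → ℝ)
    (hg1 : ∀ x : ℕ → S, ∑ s : S, g (cons s x) = 1)
    (m : ℤ) (z : S → (ℤ → S)) (hzm : ∀ s, z s m = s)
    (hz : ∀ s s' j, j ≠ m → z s j = z s' j) :
    ∑ s : S, gtilde g (fun j => z s (j + m)) = 1 := by
  have s₀ : S := Classical.arbitrary S
  have key : ∀ s : S, (fun k : ℕ => z s ((k : ℤ) + m)) =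
      cons s (fun k : ℕ => z s₀ (((k : ℤ) + 1) + m)) := by
    intro s
    funext k
    cases k with
    | zero => simpa [cons] using hzm s
    | succ k =>
      show z s ((((k : ℕ) + 1 : ℕ) : ℤ) + m) = z s₀ (((k : ℤ) + 1) + m)
      push_cast
      exact hz s s₀ _ (by omega)
  calc ∑ s : S, gtilde g (fun j => z s (j + m))
      = ∑ s : S, g (cons s (fun k : ℕ => z s₀ (((k : ℤ) + 1) + m))) := by
        apply Finset.sum_congr rfl
        intro s _
        unfold gtilde
        rw [key s]
    _ = 1 := hg1 _

lemma piCond_empty {S : Type*} (g : (ℕ → S) → ℝ) (m n : ℤ) (h : n < m)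
    (ζ : {i : ℤ // i ∈ Finset.Icc m n} → S) (x : ℤ → S) :
    piCond g m n ζ x = 1 := by
  unfold piCond
  rw [Finset.Icc_eq_empty (by omega), Finset.prod_empty]

lemma isEmpty_subtype_Icc {m n : ℤ} (h : n < m) : IsEmpty {i : ℤ // i ∈ Finset.Icc m n} := by
  constructor
  intro i
  have := i.2
  simp only [Finset.mem_Icc] at this
  omega

lemma sum_piCond {S : Type*} [Fintype S] [DecidableEq S] [Nonempty S]
    (g : (ℕ → S) → ℝ) (hg1 : ∀ x : ℕ → S, ∑ s : S, g (cons s x) = 1) (n' : ℤ) :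
    ∀ (k : ℕ) (m : ℤ), m = n' + 1 - k → ∀ x : ℤ → S,
    ∑ ζ : {i : ℤ // i ∈ Finset.Icc m n'} → S, piCond g m n' ζ x = 1 := by
  intro k
  induction k with
  | zero =>
    intro m hm x
    haveI := isEmpty_subtype_Icc (show n' < m by omega)
    haveI : Unique ({i : ℤ // i ∈ Finset.Icc m n'} → S) := Pi.uniqueOfIsEmpty _
    rw [Finset.sum_congr rfl fun ζ _ => piCond_empty g m n' (by omega) ζ x,
      Finset.sum_const, Finset.card_univ, Fintype.card_unique]
    simp
  | succ k ih =>
    intro m hm x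
    have hmn : m ≤ n' := by omega
    set e := peelEquiv (S := S) m n' hmn with he
    have hsum : ∑ ζ : {i : ℤ // i ∈ Finset.Icc m n'} → S, piCond g m n' ζ x
        = ∑ s : S, ∑ ζ' : {i : ℤ // i ∈ Finset.Icc (m + 1) n'} → S,
            piCond g m n' (e.symm (s, ζ')) x := by
      rw [← Equiv.sum_comp e.symm (fun ζ => piCond g m n' ζ x), Fintype.sum_prod_type]
    rw [hsum]
    have hpeel : ∀ (s : S) (ζ' : {i : ℤ // i ∈ Finset.Icc (m + 1) n'} → S),
        piCond g m n' (e.symm (s, ζ')) x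
          = gtilde g (fun j => patch m n' (e.symm (s, ζ')) x (j + m)) * piCond g (m + 1) n' ζ' x := by
      intro s ζ'
      rw [piCond_peel g m n' hmn, peelEquiv_symm_restrict]
    calc ∑ s : S, ∑ ζ' : {i : ℤ // i ∈ Finset.Icc (m + 1) n'} → S,
            piCond g m n' (e.symm (s, ζ')) x
        = ∑ ζ' : {i : ℤ // i ∈ Finset.Icc (m + 1) n'} → S,
            ∑ s : S, gtilde g (fun j => patch m n' (e.symm (s, ζ')) x (j + m))
              * piCond g (m + 1) n' ζ' x := by
          rw [Finset.sum_comm]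
          exact Finset.sum_congr rfl fun ζ' _ => Finset.sum_congr rfl fun s _ => hpeel s ζ'
      _ = ∑ ζ' : {i : ℤ // i ∈ Finset.Icc (m + 1) n'} → S, piCond g (m + 1) n' ζ' x := by
          apply Finset.sum_congr rfl
          intro ζ' _
          rw [← Finset.sum_mul]
          rw [gtilde_kernel_sum g hg1 m (fun s => patch m n' (e.symm (s, ζ')) x) ?_ ?_, one_mul]
          · intro s
            show patch m n' (e.symm (s, ζ')) x m = s
            rw [patch_mem m n' _ x m (by simp [Finset.mem_Icc]; omega)]
            show (peelEquiv m n' hmn).symm (s, ζ') _ = s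
            simp only [peelEquiv, Equiv.coe_fn_symm_mk]
            rw [dif_neg (by simp [Finset.mem_Icc])]
          · intro s s' j hj
            show patch m n' (e.symm (s, ζ')) x j = patch m n' (e.symm (s', ζ')) x j
            by_cases hmem : j ∈ Finset.Icc m n'
            · rw [patch_mem m n' _ x j hmem, patch_mem m n' _ x j hmem]
              have hmem' : j ∈ Finset.Icc (m + 1) n' := by
                simp only [Finset.mem_Icc] at hmem ⊢
                omega
              show (peelEquiv m n' hmn).symm (s, ζ') _ = (peelEquiv m n' hmn).symm (s', ζ') _
              simp only [peelEquiv, Equiv.coe_fn_symm_mk]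
              rw [dif_pos hmem', dif_pos hmem']
            · rw [patch_not_mem m n' _ x j hmem, patch_not_mem m n' _ x j hmem]
      _ = 1 := ih (m + 1) (by omega) x

lemma sqrt_chord {t u v : ℝ} (ht : 1 ≤ t) (hu : 0 ≤ u) (hv : 0 ≤ v)
    (h1 : u ≤ t ^ 2 * v) (h2 : v ≤ t ^ 2 * u) :
    t * (u + v) ≤ (t ^ 2 + 1) * Real.sqrt (u * v) := by
  have h3 : t * (u + v) ≤ Real.sqrt (((t ^ 2 + 1) ^ 2) * (u * v)) := by
    apply Real.le_sqrt_of_sq_le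
    nlinarith [mul_nonneg (sub_nonneg.mpr h1) (sub_nonneg.mpr h2)]
  rwa [Real.sqrt_mul (by positivity), Real.sqrt_sq (by positivity)] at h3

lemma step_affinity {S : Type*} [Fintype S] {w1 w2 : S → ℝ} {ρ : ℝ} (hρ : 1 ≤ ρ)
    (h1 : ∀ s, 0 ≤ w1 s) (h2 : ∀ s, 0 ≤ w2 s)
    (hs1 : ∑ s, w1 s = 1) (hs2 : ∑ s, w2 s = 1)
    (hr1 : ∀ s, w1 s ≤ ρ * w2 s) (hr2 : ∀ s, w2 s ≤ ρ * w1 s) :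
    1 - (1 / 2) * (Real.sqrt ρ - 1) ^ 2 ≤ ∑ s, Real.sqrt (w1 s * w2 s) := by
  set t := Real.sqrt ρ with htdef
  have ht : 1 ≤ t := by
    rw [htdef, show (1:ℝ) = Real.sqrt 1 by simp]
    exact Real.sqrt_le_sqrt hρ
  have ht2 : t ^ 2 = ρ := Real.sq_sqrt (by linarith)
  have hpos : (0:ℝ) < t ^ 2 + 1 := by positivity
  have hsum : t / (t ^ 2 + 1) * 2 ≤ ∑ s, Real.sqrt (w1 s * w2 s) := by
    have hstep : ∀ s : S, t / (t ^ 2 + 1) * (w1 s + w2 s) ≤ Real.sqrt (w1 s * w2 s) := by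
      intro s
      have hc := sqrt_chord ht (h1 s) (h2 s) (by rw [ht2]; exact hr1 s) (by rw [ht2]; exact hr2 s)
      rw [div_mul_eq_mul_div, div_le_iff₀ hpos]
      linarith
    calc t / (t ^ 2 + 1) * 2 = ∑ s, t / (t ^ 2 + 1) * (w1 s + w2 s) := by
          rw [← Finset.mul_sum, Finset.sum_add_distrib, hs1, hs2]; ring
      _ ≤ _ := Finset.sum_le_sum fun s _ => hstep s
  have hfinal : 1 - (1 / 2) * (t - 1) ^ 2 ≤ t / (t ^ 2 + 1) * 2 := by
    rw [show t / (t ^ 2 + 1) * 2 = 2 * t / (t ^ 2 + 1) by ring, le_div_iff₀ hpos]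
    nlinarith [mul_nonneg (sq_nonneg (t - 1)) (by nlinarith : (0:ℝ) ≤ t ^ 2 - 1)]
  linarith

lemma tv_le_hellinger {ι : Type*} [Fintype ι] {p q : ι → ℝ}
    (hp : ∀ i, 0 ≤ p i) (hq : ∀ i, 0 ≤ q i)
    (hps : ∑ i, p i = 1) (hqs : ∑ i, q i = 1) :
    (1 / 2) * ∑ i, |p i - q i| ≤ Real.sqrt (1 - (∑ i, Real.sqrt (p i * q i)) ^ 2) := by
  set A := ∑ i, Real.sqrt (p i * q i) with hA
  have hsq : ∀ i, Real.sqrt (p i * q i) = Real.sqrt (p i) * Real.sqrt (q i) :=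
    fun i => Real.sqrt_mul (hp i) _
  have e1 : ∑ i, (Real.sqrt (p i) - Real.sqrt (q i)) ^ 2 = 2 - 2 * A := by
    have h : ∀ i : ι, (Real.sqrt (p i) - Real.sqrt (q i)) ^ 2
        = (p i + q i) - 2 * Real.sqrt (p i * q i) := by
      intro i
      rw [hsq i, sub_sq, Real.sq_sqrt (hp i), Real.sq_sqrt (hq i)]
      ring
    rw [Finset.sum_congr rfl fun i _ => h i, Finset.sum_sub_distrib,
      Finset.sum_add_distrib, hps, hqs, ← Finset.mul_sum, ← hA]
    ring
  have e2 : ∑ i, (Real.sqrt (p i) + Real.sqrt (q i)) ^ 2 = 2 + 2 * A := by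
    have h : ∀ i : ι, (Real.sqrt (p i) + Real.sqrt (q i)) ^ 2
        = (p i + q i) + 2 * Real.sqrt (p i * q i) := by
      intro i
      rw [hsq i, add_sq, Real.sq_sqrt (hp i), Real.sq_sqrt (hq i)]
      ring
    rw [Finset.sum_congr rfl fun i _ => h i, Finset.sum_add_distrib,
      Finset.sum_add_distrib, hps, hqs, ← Finset.mul_sum, ← hA]
    ring
  have habs : ∀ i : ι, |Real.sqrt (p i) - Real.sqrt (q i)|
      * (Real.sqrt (p i) + Real.sqrt (q i)) = |p i - q i| := by
    intro i
    rw [← abs_of_nonneg (add_nonneg (Real.sqrt_nonneg (p i)) (Real.sqrt_nonneg (q i))),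
      ← abs_mul]
    congr 1
    linear_combination Real.sq_sqrt (hp i) - Real.sq_sqrt (hq i)
  have hcs := Finset.sum_mul_sq_le_sq_mul_sq Finset.univ
    (fun i => |Real.sqrt (p i) - Real.sqrt (q i)|)
    (fun i => Real.sqrt (p i) + Real.sqrt (q i))
  simp only [sq_abs] at hcs
  rw [Finset.sum_congr rfl fun i _ => habs i, e1, e2] at hcs
  apply Real.le_sqrt_of_sq_le
  nlinarith [hcs]

lemma affinity_ge {S : Type*} [Fintype S] [DecidableEq S] [Nonempty S]
    (g : (ℕ → S) → ℝ) (hg1 : ∀ x : ℕ → S, ∑ s : S, g (cons s x) = 1)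
    (hgpos : ∀ x, 0 < g x)
    (hratio : ∀ (N : ℕ) (a c : ℕ → S), (∀ k ≤ N, a k = c k) → g a ≤ rhoVar g N * g c)
    (hρ1 : ∀ N : ℕ, 1 ≤ rhoVar g N) (n' : ℤ) (hn' : n' ≤ 0) :
    ∀ (k : ℕ) (m : ℤ), m = n' + 1 - k →
    (∀ i : ℤ, m ≤ i → i ≤ n' →
      0 ≤ 1 - (1 / 2) * (Real.sqrt (rhoVar g (-i).toNat) - 1) ^ 2) →
    ∀ x y : ℤ → S, (∀ i : ℤ, n' + 1 ≤ i → i ≤ 0 → x i = y i) →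
    ∏ i ∈ Finset.Icc m n', (1 - (1 / 2) * (Real.sqrt (rhoVar g (-i).toNat) - 1) ^ 2)
      ≤ ∑ ζ : {i : ℤ // i ∈ Finset.Icc m n'} → S,
          Real.sqrt (piCond g m n' ζ x * piCond g m n' ζ y) := by
  intro k
  induction k with
  | zero =>
    intro m hm hc x y hxy
    haveI := isEmpty_subtype_Icc (show n' < m by omega)
    haveI : Unique ({i : ℤ // i ∈ Finset.Icc m n'} → S) := Pi.uniqueOfIsEmpty _
    have hp : ∏ i ∈ Finset.Icc m n', (1 - (1 / 2) * (Real.sqrt (rhoVar g (-i).toNat) - 1) ^ 2)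
        = 1 := by
      rw [Finset.Icc_eq_empty (show ¬ m ≤ n' by omega), Finset.prod_empty]
    rw [hp, Finset.sum_congr rfl fun ζ _ => by
      rw [piCond_empty g m n' (by omega) ζ x, piCond_empty g m n' (by omega) ζ y]]
    rw [Finset.sum_const, Finset.card_univ, Fintype.card_unique]
    simp
  | succ k ih =>
    intro m hm hc x y hxy
    have hmn : m ≤ n' := by omega
    set e := peelEquiv (S := S) m n' hmn with he
    -- kernels
    set Kx : S → ({i : ℤ // i ∈ Finset.Icc (m + 1) n'} → S) → ℝ :=
      fun s ζ' => gtilde g (fun j => patch m n' (e.symm (s, ζ')) x (j + m)) with hKx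
    set Ky : S → ({i : ℤ // i ∈ Finset.Icc (m + 1) n'} → S) → ℝ :=
      fun s ζ' => gtilde g (fun j => patch m n' (e.symm (s, ζ')) y (j + m)) with hKy
    have hpeelx : ∀ s ζ', piCond g m n' (e.symm (s, ζ')) x
        = Kx s ζ' * piCond g (m + 1) n' ζ' x := by
      intro s ζ'
      rw [hKx, piCond_peel g m n' hmn, peelEquiv_symm_restrict]
    have hpeely : ∀ s ζ', piCond g m n' (e.symm (s, ζ')) y
        = Ky s ζ' * piCond g (m + 1) n' ζ' y := by
      intro s ζ'
      rw [hKy, piCond_peel g m n' hmn, peelEquiv_symm_restrict]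
    have hKxnn : ∀ s ζ', 0 ≤ Kx s ζ' := fun s ζ' => (hgpos _).le
    have hKynn : ∀ s ζ', 0 ≤ Ky s ζ' := fun s ζ' => (hgpos _).le
    have hInn : ∀ (ζ' : {i : ℤ // i ∈ Finset.Icc (m + 1) n'} → S) (w : ℤ → S),
        0 ≤ piCond g (m + 1) n' ζ' w := by
      intro ζ' w
      exact Finset.prod_nonneg fun i _ => (hgpos _).le
    set ρm := rhoVar g (-m).toNat with hρm
    -- the kernel sums to one (both for x and y)
    have hKsum : ∀ (w : ℤ → S) ζ',
        ∑ s : S, gtilde g (fun j => patch m n' (e.symm (s, ζ')) w (j + m)) = 1 := by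
      intro w ζ'
      rw [gtilde_kernel_sum g hg1 m (fun s => patch m n' (e.symm (s, ζ')) w) ?_ ?_]
      · intro s
        show patch m n' (e.symm (s, ζ')) w m = s
        rw [patch_mem m n' _ w m (by simp [Finset.mem_Icc]; omega)]
        show (peelEquiv m n' hmn).symm (s, ζ') _ = s
        simp only [peelEquiv, Equiv.coe_fn_symm_mk]
        rw [dif_neg (by simp [Finset.mem_Icc])]
      · intro s s' j hj
        show patch m n' (e.symm (s, ζ')) w j = patch m n' (e.symm (s', ζ')) w j
        by_cases hmem : j ∈ Finset.Icc m n'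
        · rw [patch_mem m n' _ w j hmem, patch_mem m n' _ w j hmem]
          have hmem' : j ∈ Finset.Icc (m + 1) n' := by
            simp only [Finset.mem_Icc] at hmem ⊢
            omega
          show (peelEquiv m n' hmn).symm (s, ζ') _ = (peelEquiv m n' hmn).symm (s', ζ') _
          simp only [peelEquiv, Equiv.coe_fn_symm_mk]
          rw [dif_pos hmem', dif_pos hmem']
        · rw [patch_not_mem m n' _ w j hmem, patch_not_mem m n' _ w j hmem]
    -- ratio bound between the x- and y-kernels
    have hKratio : ∀ s ζ', Kx s ζ' ≤ ρm * Ky s ζ' ∧ Ky s ζ' ≤ ρm * Kx s ζ' := by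
      intro s ζ'
      have hagree : ∀ k : ℕ, k ≤ (-m).toNat →
          patch m n' (e.symm (s, ζ')) x ((k : ℤ) + m) = patch m n' (e.symm (s, ζ')) y ((k : ℤ) + m) := by
        intro k hk
        have hk' : (k : ℤ) ≤ -m := by omega
        by_cases hmem : ((k : ℤ) + m) ∈ Finset.Icc m n'
        · rw [patch_mem m n' _ x _ hmem, patch_mem m n' _ y _ hmem]
        · rw [patch_not_mem m n' _ x _ hmem, patch_not_mem m n' _ y _ hmem]
          apply hxy
          · simp only [Finset.mem_Icc] at hmem
            omega
          · omega
      constructor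
      · exact hratio ((-m).toNat) _ _ hagree
      · exact hratio ((-m).toNat) _ _ (fun k hk => (hagree k hk).symm)
    -- one step of the per-coordinate affinity bound
    have hstep : ∀ ζ', 1 - (1 / 2) * (Real.sqrt ρm - 1) ^ 2
        ≤ ∑ s : S, Real.sqrt (Kx s ζ' * Ky s ζ') := by
      intro ζ'
      exact step_affinity (hρ1 _) (fun s => hKxnn s ζ') (fun s => hKynn s ζ')
        (hKsum x ζ') (hKsum y ζ') (fun s => (hKratio s ζ').1) (fun s => (hKratio s ζ').2)
    have hcm : 0 ≤ 1 - (1 / 2) * (Real.sqrt ρm - 1) ^ 2 := hc m le_rfl hmn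
    have hprod : ∏ i ∈ Finset.Icc m n', (1 - (1 / 2) * (Real.sqrt (rhoVar g (-i).toNat) - 1) ^ 2)
        = (1 - (1 / 2) * (Real.sqrt ρm - 1) ^ 2)
          * ∏ i ∈ Finset.Icc (m + 1) n', (1 - (1 / 2) * (Real.sqrt (rhoVar g (-i).toNat) - 1) ^ 2) :=
      prod_Icc_peel _ m n' hmn
    have hsum : ∑ ζ : {i : ℤ // i ∈ Finset.Icc m n'} → S,
        Real.sqrt (piCond g m n' ζ x * piCond g m n' ζ y)
        = ∑ ζ' : {i : ℤ // i ∈ Finset.Icc (m + 1) n'} → S, ∑ s : S,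
            Real.sqrt (Kx s ζ' * Ky s ζ')
              * Real.sqrt (piCond g (m + 1) n' ζ' x * piCond g (m + 1) n' ζ' y) := by
      rw [← Equiv.sum_comp e.symm
        (fun ζ => Real.sqrt (piCond g m n' ζ x * piCond g m n' ζ y)), Fintype.sum_prod_type,
        Finset.sum_comm]
      apply Finset.sum_congr rfl
      intro ζ' _
      apply Finset.sum_congr rfl
      intro s _
      rw [hpeelx s ζ', hpeely s ζ',
        show Kx s ζ' * piCond g (m + 1) n' ζ' x * (Ky s ζ' * piCond g (m + 1) n' ζ' y)
          = (Kx s ζ' * Ky s ζ') * (piCond g (m + 1) n' ζ' x * piCond g (m + 1) n' ζ' y) by ring,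
        Real.sqrt_mul (mul_nonneg (hKxnn s ζ') (hKynn s ζ'))]
    rw [hprod, hsum]
    have hih := ih (m + 1) (by omega) (fun i hi1 hi2 => hc i (by omega) hi2) x y hxy
    calc (1 - (1 / 2) * (Real.sqrt ρm - 1) ^ 2)
          * ∏ i ∈ Finset.Icc (m + 1) n', (1 - (1 / 2) * (Real.sqrt (rhoVar g (-i).toNat) - 1) ^ 2)
        ≤ (1 - (1 / 2) * (Real.sqrt ρm - 1) ^ 2)
          * ∑ ζ' : {i : ℤ // i ∈ Finset.Icc (m + 1) n'} → S,
              Real.sqrt (piCond g (m + 1) n' ζ' x * piCond g (m + 1) n' ζ' y) :=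
          mul_le_mul_of_nonneg_left hih hcm
      _ = ∑ ζ' : {i : ℤ // i ∈ Finset.Icc (m + 1) n'} → S,
            (1 - (1 / 2) * (Real.sqrt ρm - 1) ^ 2)
              * Real.sqrt (piCond g (m + 1) n' ζ' x * piCond g (m + 1) n' ζ' y) :=
          Finset.mul_sum _ _ _
      _ ≤ ∑ ζ' : {i : ℤ // i ∈ Finset.Icc (m + 1) n'} → S, ∑ s : S,
            Real.sqrt (Kx s ζ' * Ky s ζ')
              * Real.sqrt (piCond g (m + 1) n' ζ' x * piCond g (m + 1) n' ζ' y) := by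
          apply Finset.sum_le_sum
          intro ζ' _
          rw [← Finset.sum_mul]
          exact mul_le_mul_of_nonneg_right (hstep ζ') (Real.sqrt_nonneg _)

/-- **Corollary.**  Let `g ∈ 𝒢` be positive and continuous and `B = (b_n)` a
sequence of positive integers.  For every `n ≥ 1` with
`ρ_{[0,B_{n-1}]}(g) ≤ (1+√2)²`,
`d_n(g,B) ≤ √(1 - ∏_{i=B_{n-1}}^{B_n - 1} (1 - (1/2)(√(ρ_{[0,i]}(g)) - 1)²)²)`. -/
theorem dSeq_le_hellinger {S : Type*} [Fintype S] [DecidableEq S]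
    [MeasurableSpace S] [TopologicalSpace S] [DiscreteTopology S] [BorelSpace S]
    (hS : 2 ≤ Fintype.card S)
    (g : (ℕ → S) → ℝ) (hg : MemG g) (hgpos : ∀ x, 0 < g x) (hgcont : Continuous g)
    (b : ℕ → ℕ) (hb : ∀ n, 1 ≤ n → 0 < b n) :
    ∀ n : ℕ, 1 ≤ n → rhoVar g (Bsum b (n - 1)) ≤ (1 + Real.sqrt 2) ^ 2 →
      dSeq g b n ≤ Real.sqrt (1 - ∏ i ∈ Finset.Icc (Bsum b (n - 1)) (Bsum b n - 1),
        (1 - (1 / 2) * (Real.sqrt (rhoVar g i) - 1) ^ 2) ^ 2) := by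
  intro n hn hρc
  haveI : Nonempty S := Fintype.card_pos_iff.mp (by omega)
  -- extreme values of g
  obtain ⟨x₀, -, hmin⟩ := isCompact_univ.exists_isMinOn Set.univ_nonempty hgcont.continuousOn
  obtain ⟨x₁, -, hmax⟩ := isCompact_univ.exists_isMaxOn Set.univ_nonempty hgcont.continuousOn
  have hmin' : ∀ v, g x₀ ≤ g v := fun v => (isMinOn_iff.mp hmin) v (Set.mem_univ v)
  have hmax' : ∀ v, g v ≤ g x₁ := fun v => (isMaxOn_iff.mp hmax) v (Set.mem_univ v)
  -- basic facts about rhoVar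
  have hbdd : ∀ N : ℕ, BddAbove {r : ℝ | ∃ x y : ℕ → S, (∀ i ≤ N, x i = y i) ∧ r = g x / g y} := by
    intro N
    refine ⟨g x₁ / g x₀, ?_⟩
    rintro r ⟨u, v, -, rfl⟩
    exact div_le_div₀ (hgpos x₁).le (hmax' u) (hgpos x₀) (hmin' v)
  have hmemone : ∀ N : ℕ, (1 : ℝ) ∈ {r : ℝ | ∃ x y : ℕ → S, (∀ i ≤ N, x i = y i) ∧ r = g x / g y} :=
    fun N => ⟨x₀, x₀, fun _ _ => rfl, (div_self (hgpos x₀).ne').symm⟩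
  have hρ1 : ∀ N : ℕ, 1 ≤ rhoVar g N := fun N => le_csSup (hbdd N) (hmemone N)
  have hratio : ∀ (N : ℕ) (u v : ℕ → S), (∀ k ≤ N, u k = v k) → g u ≤ rhoVar g N * g v := by
    intro N u v hagree
    have h := le_csSup (hbdd N) (show g u / g v ∈ _ from ⟨u, v, hagree, rfl⟩)
    rwa [div_le_iff₀ (hgpos v)] at h
  have hmono : ∀ N M : ℕ, N ≤ M → rhoVar g M ≤ rhoVar g N := by
    intro N M hNM
    apply csSup_le_csSup (hbdd N) ⟨1, hmemone M⟩
    rintro r ⟨u, v, hagree, rfl⟩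
    exact ⟨u, v, fun i hi => hagree i (le_trans hi hNM), rfl⟩
  -- notation for the sums of b
  set N1 := Bsum b (n - 1) with hN1
  set N2 := Bsum b n with hN2
  have hsplit : N2 = N1 + b n := by
    rw [hN1, hN2]
    unfold Bsum
    rw [show Finset.Icc 1 n = insert n (Finset.Icc 1 (n - 1)) by
      ext i; simp only [Finset.mem_Icc, Finset.mem_insert]; omega,
      Finset.sum_insert (by simp only [Finset.mem_Icc]; omega)]
    ring
  have hblt : N1 < N2 := by have := hb n hn; omega
  -- nonnegativity of the factors
  have hcnn : ∀ N : ℕ, N1 ≤ N → 0 ≤ 1 - (1 / 2) * (Real.sqrt (rhoVar g N) - 1) ^ 2 := by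
    intro N hN
    have h1 : rhoVar g N ≤ (1 + Real.sqrt 2) ^ 2 := le_trans (hmono N1 N hN) hρc
    have h3 : Real.sqrt (rhoVar g N) ≤ 1 + Real.sqrt 2 := by
      calc Real.sqrt (rhoVar g N) ≤ Real.sqrt ((1 + Real.sqrt 2) ^ 2) := Real.sqrt_le_sqrt h1
        _ = 1 + Real.sqrt 2 := Real.sqrt_sq (by positivity)
    have h4 : 1 ≤ Real.sqrt (rhoVar g N) := by
      rw [show (1:ℝ) = Real.sqrt 1 by simp]
      exact Real.sqrt_le_sqrt (hρ1 N)
    nlinarith [Real.sq_sqrt (show (0:ℝ) ≤ 2 by norm_num), Real.sqrt_nonneg 2]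
  -- the interval J_n
  set m : ℤ := Jlo b n with hmdef
  set n' : ℤ := Jhi b n with hn'def
  have hmval : m = 1 - (N2 : ℤ) := rfl
  have hn'val : n' = -(N1 : ℤ) := rfl
  have hn'0 : n' ≤ 0 := by rw [hn'val]; omega
  have hmk : m = n' + 1 - (b n : ℤ) := by rw [hmval, hn'val]; omega
  -- factor nonnegativity on the interval
  have hcint : ∀ i : ℤ, m ≤ i → i ≤ n' →
      0 ≤ 1 - (1 / 2) * (Real.sqrt (rhoVar g (-i).toNat) - 1) ^ 2 := by
    intro i hi1 hi2
    apply hcnn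
    rw [hmval] at hi1
    rw [hn'val] at hi2
    omega
  apply Real.sSup_le
  · rintro r ⟨x, y, hxy, rfl⟩
    have hxy' : ∀ i : ℤ, n' + 1 ≤ i → i ≤ 0 → x i = y i := by
      intro i hi1 hi2
      exact hxy i (by rw [hn'val] at hi1; omega) hi2
    -- the two conditional probability vectors
    have hp : ∀ ζ : {i : ℤ // i ∈ Finset.Icc m n'} → S, 0 ≤ piCond g m n' ζ x :=
      fun ζ => Finset.prod_nonneg fun i _ => (hgpos _).le
    have hq : ∀ ζ : {i : ℤ // i ∈ Finset.Icc m n'} → S, 0 ≤ piCond g m n' ζ y :=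
      fun ζ => Finset.prod_nonneg fun i _ => (hgpos _).le
    have hps : ∑ ζ : {i : ℤ // i ∈ Finset.Icc m n'} → S, piCond g m n' ζ x = 1 :=
      sum_piCond g hg.2.2 n' (b n) m hmk x
    have hqs : ∑ ζ : {i : ℤ // i ∈ Finset.Icc m n'} → S, piCond g m n' ζ y = 1 :=
      sum_piCond g hg.2.2 n' (b n) m hmk y
    have htv := tv_le_hellinger hp hq hps hqs
    have haff := affinity_ge g hg.2.2 hgpos hratio hρ1 n' hn'0 (b n) m hmk hcint x y hxy'
    set A := ∑ ζ : {i : ℤ // i ∈ Finset.Icc m n'} → S,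
      Real.sqrt (piCond g m n' ζ x * piCond g m n' ζ y) with hA
    set P := ∏ i ∈ Finset.Icc m n',
      (1 - (1 / 2) * (Real.sqrt (rhoVar g (-i).toNat) - 1) ^ 2) with hP
    have hPnn : 0 ≤ P := Finset.prod_nonneg fun i hi =>
      hcint i (Finset.mem_Icc.mp hi).1 (Finset.mem_Icc.mp hi).2
    have hsq : Real.sqrt (1 - A ^ 2) ≤ Real.sqrt (1 - P ^ 2) :=
      Real.sqrt_le_sqrt (by nlinarith [haff, hPnn])
    -- reindex the product
    have hreind : P = ∏ i ∈ Finset.Icc N1 (N2 - 1),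
        (1 - (1 / 2) * (Real.sqrt (rhoVar g i) - 1) ^ 2) := by
      rw [hP]
      apply Finset.prod_nbij' (fun i : ℤ => (-i).toNat) (fun j : ℕ => -(j : ℤ))
      · intro i hi
        simp only [Finset.mem_Icc] at hi ⊢
        rw [hmval] at hi
        rw [hn'val] at hi
        omega
      · intro j hj
        simp only [Finset.mem_Icc] at hj ⊢
        rw [hmval, hn'val]
        omega
      · intro i hi
        simp only [Finset.mem_Icc] at hi
        rw [hmval] at hi
        rw [hn'val] at hi
        omega
      · intro j _
        omega
      · intro i _
        rfl
    have hfinal : ∏ i ∈ Finset.Icc N1 (N2 - 1),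
        (1 - (1 / 2) * (Real.sqrt (rhoVar g i) - 1) ^ 2) ^ 2
        = P ^ 2 := by
      rw [hreind, Finset.prod_pow]
    calc (1 / 2) * ∑ ζ : {i : ℤ // i ∈ Finset.Icc m n'} → S,
          |piCond g m n' ζ x - piCond g m n' ζ y|
        ≤ Real.sqrt (1 - A ^ 2) := htv
      _ ≤ Real.sqrt (1 - P ^ 2) := hsq
      _ = _ := by rw [hfinal]
  · exact Real.sqrt_nonneg _

end
end

section
/- Let g ∈ 𝒢 be positive and continuous, let B = (b_n)_{n≥1} be a sequence of positive integers, and suppose N ≥ 1 satisfies ρ_{[0, B_N]}(g) < (√2 + 1)². Then there exists K > 0 such that for all n ≥ N + 1, d_n(g,B) ≤ √( ∑_{i=B_{n−1}}^{B_n − 1} ( (log ρ_{[0,i]}(g))²/4 + K (log ρ_{[0,i]}(g))³ ) ). -/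
open Filter Topology MeasureTheory

noncomputable section

section Aux

variable {S : Type*} [Fintype S] [DecidableEq S]

lemma piCond_pos {g : (ℕ → S) → ℝ} (hg : ∀ x, 0 < g x) (m M : ℤ)
    (ζ : {i : ℤ // i ∈ Finset.Icc m M} → S) (x : ℤ → S) : 0 < piCond g m M ζ x :=
  Finset.prod_pos fun _ _ => hg _

def combineCfg (m M : ℤ) (s : S) (ζ' : {i : ℤ // i ∈ Finset.Icc (m+1) M} → S) :
    {i : ℤ // i ∈ Finset.Icc m M} → S :=
  fun i => if h : i.1 ∈ Finset.Icc (m+1) M then ζ' ⟨i.1, h⟩ else s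

def splitEquiv (m M : ℤ) (hm : m ≤ M) :
    (S × ({i : ℤ // i ∈ Finset.Icc (m+1) M} → S)) ≃ ({i : ℤ // i ∈ Finset.Icc m M} → S) where
  toFun p := combineCfg m M p.1 p.2
  invFun ζ := (ζ ⟨m, Finset.mem_Icc.mpr (by omega)⟩,
    fun i => ζ ⟨i.1, Finset.mem_Icc.mpr (by have := Finset.mem_Icc.mp i.2; omega)⟩)
  left_inv p := by
    obtain ⟨s, ζ'⟩ := p
    refine Prod.ext ?_ ?_
    · show combineCfg m M s ζ' ⟨m, _⟩ = s
      have : (m : ℤ) ∉ Finset.Icc (m+1) M := by simp [Finset.mem_Icc]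
      simp [combineCfg, this]
    · funext i
      show combineCfg m M s ζ' ⟨i.1, _⟩ = ζ' i
      simp [combineCfg, i.2]
  right_inv ζ := by
    funext i
    by_cases h : i.1 ∈ Finset.Icc (m+1) M
    · simp [combineCfg, h]
    · have hi := i.2
      rw [Finset.mem_Icc] at hi
      rw [Finset.mem_Icc] at h
      have him : i.1 = m := by omega
      show combineCfg m M _ _ i = ζ i
      rw [combineCfg]
      rw [dif_neg (by rw [Finset.mem_Icc]; omega)]
      exact congrArg ζ (Subtype.ext him.symm)

lemma patch_combine_of_gt (m M : ℤ) (s : S) (ζ' : {i : ℤ // i ∈ Finset.Icc (m+1) M} → S)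
    (z : ℤ → S) {j : ℤ} (hj : m < j) :
    patch m M (combineCfg m M s ζ') z j = patch (m+1) M ζ' z j := by
  unfold patch combineCfg
  by_cases h : j ∈ Finset.Icc (m+1) M
  · have h' : j ∈ Finset.Icc m M := by rw [Finset.mem_Icc] at h ⊢; omega
    rw [dif_pos h', dif_pos h, dif_pos h]
  · have h' : j ∉ Finset.Icc m M := by rw [Finset.mem_Icc] at h ⊢; omega
    rw [dif_neg h', dif_neg h]

lemma piCond_decomp (g : (ℕ → S) → ℝ) (m M : ℤ) (hm : m ≤ M) (s : S)
    (ζ' : {i : ℤ // i ∈ Finset.Icc (m+1) M} → S) (z : ℤ → S) :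
    piCond g m M (combineCfg m M s ζ') z
      = g (cons s (fun q : ℕ => patch (m+1) M ζ' z (↑q + (m+1))))
        * piCond g (m+1) M ζ' z := by
  have hins : Finset.Icc m M = insert m (Finset.Icc (m+1) M) := by
    ext j; simp only [Finset.mem_Icc, Finset.mem_insert]; omega
  have hnot : m ∉ Finset.Icc (m+1) M := by simp [Finset.mem_Icc]
  unfold piCond
  rw [hins, Finset.prod_insert hnot]
  congr 1
  · show gtilde g (fun j => patch m M (combineCfg m M s ζ') z (j + m)) = _
    unfold gtilde
    congr 1
    funext q
    cases q with
    | zero =>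
      show patch m M (combineCfg m M s ζ') z ((0:ℕ) + m) = s
      have h0 : ((0:ℕ):ℤ) + m = m := by push_cast; ring
      rw [h0]
      have hmem : m ∈ Finset.Icc m M := by rw [Finset.mem_Icc]; omega
      show (if h : m ∈ Finset.Icc m M then combineCfg m M s ζ' ⟨m, h⟩ else z m) = s
      rw [dif_pos hmem]
      show (if h : m ∈ Finset.Icc (m+1) M then ζ' ⟨m, h⟩ else s) = s
      rw [dif_neg hnot]
    | succ k =>
      show patch m M (combineCfg m M s ζ') z (↑(k+1) + m)
          = patch (m+1) M ζ' z (↑k + (m+1))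
      have h1 : ((k+1:ℕ):ℤ) + m = ↑k + (m+1) := by push_cast; ring
      rw [h1]
      exact patch_combine_of_gt m M s ζ' z (by omega)
  · apply Finset.prod_congr rfl
    intro i hi
    rw [Finset.mem_Icc] at hi
    unfold gtilde
    congr 1
    funext q
    exact patch_combine_of_gt m M s ζ' z (by omega)

lemma tail_agree (m M : ℤ) (hm0 : m ≤ 0)
    (ζ' : {i : ℤ // i ∈ Finset.Icc (m+1) M} → S) (x y : ℤ → S)
    (hxy : ∀ i : ℤ, M + 1 ≤ i → i ≤ 0 → x i = y i) (s : S) :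
    ∀ q : ℕ, q ≤ (-m).toNat →
      cons s (fun q : ℕ => patch (m+1) M ζ' x (↑q + (m+1))) q
        = cons s (fun q : ℕ => patch (m+1) M ζ' y (↑q + (m+1))) q := by
  intro q hq
  cases q with
  | zero => rfl
  | succ k =>
    show patch (m+1) M ζ' x (↑k + (m+1)) = patch (m+1) M ζ' y (↑k + (m+1))
    have hk : (k:ℤ) + (m+1) ≤ 0 := by omega
    unfold patch
    by_cases h : (k:ℤ) + (m+1) ∈ Finset.Icc (m+1) M
    · rw [dif_pos h, dif_pos h]
    · rw [dif_neg h, dif_neg h]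
      rw [Finset.mem_Icc] at h
      exact hxy _ (by omega) hk

end Aux

section Analytic

lemma site_aff {S : Type*} [Fintype S] (u v : S → ℝ) (hu : ∀ s, 0 < u s) (hv : ∀ s, 0 < v s)
    (hu1 : ∑ s, u s = 1) (hv1 : ∑ s, v s = 1) (ρ : ℝ) (hρ : 1 ≤ ρ)
    (huv : ∀ s, u s ≤ ρ * v s) (hvu : ∀ s, v s ≤ ρ * u s) :
    1 - (Real.sqrt ρ - 1)^2/2 ≤ ∑ s, Real.sqrt (u s * v s) := by
  have hsρ : 1 ≤ Real.sqrt ρ := by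
    rw [show (1:ℝ) = Real.sqrt 1 by simp]
    exact Real.sqrt_le_sqrt hρ
  have key : ∀ s, (Real.sqrt (u s) - Real.sqrt (v s))^2 ≤ (Real.sqrt ρ - 1)^2 * v s := by
    intro s
    have hsu := Real.sqrt_nonneg (u s)
    have hsv := Real.sqrt_nonneg (v s)
    have hv2 : Real.sqrt (v s) ^ 2 = v s := Real.sq_sqrt (hv s).le
    rcases le_total (v s) (u s) with h | h
    · have h1 : Real.sqrt (u s) ≤ Real.sqrt ρ * Real.sqrt (v s) := by
        rw [← Real.sqrt_mul (by linarith)]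
        exact Real.sqrt_le_sqrt (huv s)
      have h2 : Real.sqrt (v s) ≤ Real.sqrt (u s) := Real.sqrt_le_sqrt h
      have h3 : Real.sqrt (u s) - Real.sqrt (v s) ≤ (Real.sqrt ρ - 1) * Real.sqrt (v s) := by
        nlinarith
      have h4 := pow_le_pow_left₀ (by linarith) h3 2
      calc (Real.sqrt (u s) - Real.sqrt (v s))^2
          ≤ ((Real.sqrt ρ - 1) * Real.sqrt (v s))^2 := h4
        _ = (Real.sqrt ρ - 1)^2 * v s := by rw [mul_pow, hv2]
    · have h1 : Real.sqrt (v s) ≤ Real.sqrt ρ * Real.sqrt (u s) := by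
        rw [← Real.sqrt_mul (by linarith)]
        exact Real.sqrt_le_sqrt (hvu s)
      have h2 : Real.sqrt (u s) ≤ Real.sqrt (v s) := Real.sqrt_le_sqrt h
      have h3 : Real.sqrt (v s) - Real.sqrt (u s) ≤ (Real.sqrt ρ - 1) * Real.sqrt (v s) := by
        nlinarith
      have h4 := pow_le_pow_left₀ (by linarith) h3 2
      calc (Real.sqrt (u s) - Real.sqrt (v s))^2
          = (Real.sqrt (v s) - Real.sqrt (u s))^2 := by ring
        _ ≤ ((Real.sqrt ρ - 1) * Real.sqrt (v s))^2 := h4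
        _ = (Real.sqrt ρ - 1)^2 * v s := by rw [mul_pow, hv2]
  have e : ∀ s, Real.sqrt (u s * v s)
      = (u s + v s)/2 - (Real.sqrt (u s) - Real.sqrt (v s))^2/2 := by
    intro s
    have h1 : Real.sqrt (u s) ^ 2 = u s := Real.sq_sqrt (hu s).le
    have h2 : Real.sqrt (v s) ^ 2 = v s := Real.sq_sqrt (hv s).le
    rw [Real.sqrt_mul (hu s).le]
    linear_combination h1/2 + h2/2
  have hksum : ∑ s, (Real.sqrt (u s) - Real.sqrt (v s))^2 ≤ (Real.sqrt ρ - 1)^2 := by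
    calc ∑ s, (Real.sqrt (u s) - Real.sqrt (v s))^2
        ≤ ∑ s, (Real.sqrt ρ - 1)^2 * v s := Finset.sum_le_sum fun s _ => key s
      _ = (Real.sqrt ρ - 1)^2 * ∑ s, v s := (Finset.mul_sum _ _ _).symm
      _ = (Real.sqrt ρ - 1)^2 := by rw [hv1, mul_one]
  have hsum : ∑ s, ((u s + v s)/2 - (Real.sqrt (u s) - Real.sqrt (v s))^2/2)
      = (1 + 1)/2 - (∑ s, (Real.sqrt (u s) - Real.sqrt (v s))^2)/2 := by
    rw [Finset.sum_sub_distrib]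
    rw [show (∑ s, (u s + v s)/2) = (∑ s, u s + ∑ s, v s)/2 from by
      rw [← Finset.sum_div, Finset.sum_add_distrib]]
    rw [hu1, hv1, ← Finset.sum_div]
  calc 1 - (Real.sqrt ρ - 1)^2/2
      ≤ ∑ s, ((u s + v s)/2 - (Real.sqrt (u s) - Real.sqrt (v s))^2/2) := by
        rw [hsum]; linarith
    _ = ∑ s, Real.sqrt (u s * v s) := by
        exact (Finset.sum_congr rfl fun s _ => (e s)).symm

lemma aff_le_one {ι : Type*} [Fintype ι] (P Q : ι → ℝ) (hP : ∀ i, 0 ≤ P i) (hQ : ∀ i, 0 ≤ Q i)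
    (hP1 : ∑ i, P i = 1) (hQ1 : ∑ i, Q i = 1) : ∑ i, Real.sqrt (P i * Q i) ≤ 1 := by
  have h : ∀ i, Real.sqrt (P i * Q i) ≤ (P i + Q i)/2 := by
    intro i
    have h2 : Real.sqrt (P i * Q i) ≤ Real.sqrt (((P i + Q i)/2)^2) :=
      Real.sqrt_le_sqrt (by nlinarith [hP i, hQ i, sq_nonneg (P i - Q i)])
    rwa [Real.sqrt_sq (by linarith [hP i, hQ i])] at h2
  calc ∑ i, Real.sqrt (P i * Q i) ≤ ∑ i, (P i + Q i)/2 :=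
        Finset.sum_le_sum fun i _ => h i
    _ = 1 := by
        rw [show (∑ i, (P i + Q i)/2) = (∑ i, P i + ∑ i, Q i)/2 by
          rw [← Finset.sum_add_distrib, Finset.sum_div]]
        rw [hP1, hQ1]; norm_num

lemma sqrt_sub_one_sq_le {r R : ℝ} (h1 : 1 ≤ r) (hR : r ≤ R) :
    (Real.sqrt r - 1)^2 ≤ (Real.log r)^2/4 + (R/4 + 1) * (Real.log r)^3 := by
  set a := Real.log r with ha'
  have ha : 0 ≤ a := Real.log_nonneg h1
  have hr : Real.exp a = r := Real.exp_log (by linarith)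
  have hs : Real.sqrt r = Real.exp (a/2) := by rw [← hr, ← Real.exp_half]
  have key : ∀ t : ℝ, 0 ≤ t → Real.exp t - 1 ≤ t * Real.exp t := by
    intro t ht
    have hmul : Real.exp (-t) * Real.exp t = 1 := by
      rw [← Real.exp_add]; simp
    nlinarith [Real.add_one_le_exp (-t), Real.exp_pos t]
  have e2 := key (a/2) (by linarith)
  have esq : Real.exp (a/2) * Real.exp (a/2) = Real.exp a := by
    rw [← Real.exp_add]; ring_nf
  have hexp1 : 1 ≤ Real.exp (a/2) := Real.one_le_exp (by linarith)
  have h4 : (Real.exp (a/2) - 1)^2 ≤ a^2/4 * Real.exp a := by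
    have h0 : 0 ≤ Real.exp (a/2) - 1 := by linarith
    have := pow_le_pow_left₀ h0 e2 2
    calc (Real.exp (a/2) - 1)^2 ≤ (a/2 * Real.exp (a/2))^2 := this
      _ = a^2/4 * (Real.exp (a/2) * Real.exp (a/2)) := by ring
      _ = a^2/4 * Real.exp a := by rw [esq]
  have h5 : Real.exp a - 1 ≤ a * R := by
    have := key a ha
    have h6 : a * Real.exp a ≤ a * R := by
      apply mul_le_mul_of_nonneg_left _ ha
      rw [hr]; exact hR
    linarith
  have h7 : a^2/4 * (Real.exp a - 1) ≤ a^2/4 * (a * R) :=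
    mul_le_mul_of_nonneg_left h5 (by positivity)
  have ha3 : 0 ≤ a^3 := by positivity
  rw [hs]
  nlinarith [h4, h7]

end Analytic

section Chain

variable {S : Type*} [Fintype S] [DecidableEq S]

lemma chain (g : (ℕ → S) → ℝ) (hgpos : ∀ x, 0 < g x)
    (hgsum : ∀ x : ℕ → S, ∑ s : S, g (cons s x) = 1)
    (ρ : ℕ → ℝ) (hρ1 : ∀ k, 1 ≤ ρ k)
    (hratio : ∀ k (a c : ℕ → S), (∀ i ≤ k, a i = c i) → g a ≤ ρ k * g c)
    (M : ℤ) (hM : M ≤ 0) (x y : ℤ → S)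
    (hxy : ∀ i : ℤ, M + 1 ≤ i → i ≤ 0 → x i = y i) :
    ∀ (k : ℕ) (m : ℤ), m = M + 1 - k →
      (∀ z : ℤ → S, ∑ ζ : {i : ℤ // i ∈ Finset.Icc m M} → S, piCond g m M ζ z = 1) ∧
      1 - ∑ i ∈ Finset.Icc m M, (Real.sqrt (ρ (-i).toNat) - 1)^2 / 2
        ≤ ∑ ζ : {i : ℤ // i ∈ Finset.Icc m M} → S,
            Real.sqrt (piCond g m M ζ x * piCond g m M ζ y) := by
  intro k
  induction k with
  | zero =>
    intro m hm
    have hemp : Finset.Icc m M = ∅ := Finset.Icc_eq_empty (by omega)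
    haveI : IsEmpty {i : ℤ // i ∈ Finset.Icc m M} :=
      ⟨fun i => Finset.eq_empty_iff_forall_notMem.mp hemp i.1 i.2⟩
    have hp : ∀ (ζ : {i : ℤ // i ∈ Finset.Icc m M} → S) (z : ℤ → S), piCond g m M ζ z = 1 := by
      intro ζ z; unfold piCond; rw [hemp, Finset.prod_empty]
    have hcard : ∀ (f : ({i : ℤ // i ∈ Finset.Icc m M} → S) → ℝ) (c : ℝ),
        (∀ ζ, f ζ = c) → ∑ ζ, f ζ = c := by
      intro f c hf
      rw [Finset.sum_congr rfl fun ζ _ => hf ζ, Finset.sum_const]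
      rw [Finset.card_univ, Fintype.card_eq_one_iff_nonempty_unique.mpr ⟨Pi.uniqueOfIsEmpty _⟩]
      simp
    constructor
    · intro z; exact hcard _ 1 fun ζ => hp ζ z
    · have h0 : ∑ i ∈ Finset.Icc m M, (Real.sqrt (ρ (-i).toNat) - 1)^2 / 2 = 0 := by
        rw [hemp]; exact Finset.sum_empty
      rw [h0, hcard _ 1 fun ζ => by rw [hp ζ x, hp ζ y, one_mul, Real.sqrt_one]]
      norm_num
  | succ k ih =>
    intro m hm
    have hmM : m ≤ M := by omega
    have hm0 : m ≤ 0 := by omega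
    obtain ⟨ih1, ih2⟩ := ih (m+1) (by push_cast at hm ⊢; omega)
    have hsum_eq : ∀ (f : ({i : ℤ // i ∈ Finset.Icc m M} → S) → ℝ),
        ∑ ζ, f ζ = ∑ s : S, ∑ ζ' : {i : ℤ // i ∈ Finset.Icc (m+1) M} → S,
          f (combineCfg m M s ζ') := by
      intro f
      rw [← Equiv.sum_comp (splitEquiv m M hmM) f, Fintype.sum_prod_type]
      rfl
    have hdec : ∀ (z : ℤ → S) (s : S) ζ', piCond g m M (combineCfg m M s ζ') z
        = g (cons s (fun q : ℕ => patch (m+1) M ζ' z (↑q + (m+1))))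
          * piCond g (m+1) M ζ' z := fun z s ζ' => piCond_decomp g m M hmM s ζ' z
    have sum1 : ∀ z : ℤ → S, ∑ ζ : {i : ℤ // i ∈ Finset.Icc m M} → S, piCond g m M ζ z = 1 := by
      intro z
      rw [hsum_eq, Finset.sum_comm]
      calc ∑ ζ' : {i : ℤ // i ∈ Finset.Icc (m+1) M} → S, ∑ s : S,
              piCond g m M (combineCfg m M s ζ') z
          = ∑ ζ' : {i : ℤ // i ∈ Finset.Icc (m+1) M} → S, piCond g (m+1) M ζ' z := by
            apply Finset.sum_congr rfl
            intro ζ' _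
            rw [Finset.sum_congr rfl fun s _ => hdec z s ζ', ← Finset.sum_mul,
              hgsum, one_mul]
        _ = 1 := ih1 z
    refine ⟨sum1, ?_⟩
    -- affinity bound
    set hval : ℝ := (Real.sqrt (ρ (-m).toNat) - 1)^2 / 2 with hhval
    set H' : ℝ := ∑ i ∈ Finset.Icc (m+1) M, (Real.sqrt (ρ (-i).toNat) - 1)^2 / 2 with hH'
    have hins : Finset.Icc m M = insert m (Finset.Icc (m+1) M) := by
      ext j; simp only [Finset.mem_Icc, Finset.mem_insert]; omega
    have hnot : m ∉ Finset.Icc (m+1) M := by simp [Finset.mem_Icc]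
    have hLHS : ∑ i ∈ Finset.Icc m M, (Real.sqrt (ρ (-i).toNat) - 1)^2 / 2 = hval + H' := by
      rw [hins, Finset.sum_insert hnot]
    rw [hLHS]
    set A' : ℝ := ∑ ζ' : {i : ℤ // i ∈ Finset.Icc (m+1) M} → S,
        Real.sqrt (piCond g (m+1) M ζ' x * piCond g (m+1) M ζ' y) with hA'
    have hA'le1 : A' ≤ 1 := aff_le_one _ _ (fun ζ' => (piCond_pos hgpos _ _ ζ' x).le)
      (fun ζ' => (piCond_pos hgpos _ _ ζ' y).le) (ih1 x) (ih1 y)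
    have hval0 : 0 ≤ hval := by positivity
    have hH'0 : 0 ≤ H' := Finset.sum_nonneg fun i _ => by positivity
    set A : ℝ := ∑ ζ : {i : ℤ // i ∈ Finset.Icc m M} → S,
        Real.sqrt (piCond g m M ζ x * piCond g m M ζ y) with hA
    have hA_ge : (1 - hval) * A' ≤ A := by
      rw [hA, hsum_eq, Finset.sum_comm]
      have hterm : ∀ ζ' : {i : ℤ // i ∈ Finset.Icc (m+1) M} → S,
          (1 - hval) * Real.sqrt (piCond g (m+1) M ζ' x * piCond g (m+1) M ζ' y)
            ≤ ∑ s : S, Real.sqrt (piCond g m M (combineCfg m M s ζ') x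
                * piCond g m M (combineCfg m M s ζ') y) := by
        intro ζ'
        set u : S → ℝ := fun s => g (cons s (fun q : ℕ => patch (m+1) M ζ' x (↑q + (m+1)))) with hu
        set v : S → ℝ := fun s => g (cons s (fun q : ℕ => patch (m+1) M ζ' y (↑q + (m+1)))) with hv
        have hagree := tail_agree m M hm0 ζ' x y hxy
        have hu0 : ∀ s, 0 < u s := fun s => by simp only [hu]; exact hgpos _
        have hv0 : ∀ s, 0 < v s := fun s => by simp only [hv]; exact hgpos _
        have hu1 : ∑ s : S, u s = 1 := by simp only [hu]; exact hgsum _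
        have hv1 : ∑ s : S, v s = 1 := by simp only [hv]; exact hgsum _
        have hsite : 1 - hval ≤ ∑ s : S, Real.sqrt (u s * v s) := by
          rw [hhval]
          apply site_aff u v hu0 hv0 hu1 hv1 (ρ (-m).toNat) (hρ1 _)
          · intro s; simp only [hu, hv]
            exact hratio _ _ _ (fun i hi => hagree s i hi)
          · intro s; simp only [hu, hv]
            exact hratio _ _ _ (fun i hi => (hagree s i hi).symm)
        have hrw : ∀ s : S, Real.sqrt (piCond g m M (combineCfg m M s ζ') x
              * piCond g m M (combineCfg m M s ζ') y)
            = Real.sqrt (u s * v s)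
              * Real.sqrt (piCond g (m+1) M ζ' x * piCond g (m+1) M ζ' y) := by
          intro s
          rw [hdec x s ζ', hdec y s ζ']
          rw [show (u s * piCond g (m+1) M ζ' x) * (v s * piCond g (m+1) M ζ' y)
              = (u s * v s) * (piCond g (m+1) M ζ' x * piCond g (m+1) M ζ' y) from by ring]
          rw [Real.sqrt_mul (mul_nonneg (hu0 s).le (hv0 s).le)]
        rw [Finset.sum_congr rfl fun s _ => hrw s, ← Finset.sum_mul]
        exact mul_le_mul_of_nonneg_right hsite (Real.sqrt_nonneg _)
      calc (1 - hval) * A'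
          = ∑ ζ' : {i : ℤ // i ∈ Finset.Icc (m+1) M} → S,
              (1 - hval) * Real.sqrt (piCond g (m+1) M ζ' x * piCond g (m+1) M ζ' y) := by
            rw [hA', Finset.mul_sum]
        _ ≤ _ := Finset.sum_le_sum fun ζ' _ => hterm ζ'
    have hA'ge := ih2
    have h1 : hval * A' ≤ hval * 1 := mul_le_mul_of_nonneg_left hA'le1 hval0
    nlinarith [hA_ge, hA'ge, h1]

end Chain

set_option maxHeartbeats 1600000 in
/-- **Corollary.**  Let `g ∈ 𝒢` be positive and continuous, `B = (b_n)` a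
sequence of positive integers, and suppose `N ≥ 1` satisfies
`ρ_{[0,B_N]}(g) < (√2+1)²`.  Then there is `K > 0` such that for all `n ≥ N + 1`,
`d_n(g,B) ≤ √(∑_{i=B_{n-1}}^{B_n - 1} ((log ρ_{[0,i]}(g))²/4 + K (log ρ_{[0,i]}(g))³))`. -/
theorem dSeq_le_log_rho {S : Type*} [Fintype S] [DecidableEq S]
    [MeasurableSpace S] [TopologicalSpace S] [DiscreteTopology S] [BorelSpace S]
    (hS : 2 ≤ Fintype.card S)
    (g : (ℕ → S) → ℝ) (hg : MemG g) (hgpos : ∀ x, 0 < g x) (hgcont : Continuous g)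
    (b : ℕ → ℕ) (hb : ∀ n, 1 ≤ n → 0 < b n)
    (N : ℕ) (hN : 1 ≤ N) (hρ : rhoVar g (Bsum b N) < (Real.sqrt 2 + 1) ^ 2) :
    ∃ K > (0 : ℝ), ∀ n : ℕ, N + 1 ≤ n →
      dSeq g b n ≤ Real.sqrt (∑ i ∈ Finset.Icc (Bsum b (n - 1)) (Bsum b n - 1),
        ((Real.log (rhoVar g i)) ^ 2 / 4 + K * (Real.log (rhoVar g i)) ^ 3)) := by
  haveI : Nonempty S := Fintype.card_pos_iff.mp (by omega)
  obtain ⟨x₀, -, hmin'⟩ := isCompact_univ.exists_isMinOn Set.univ_nonempty hgcont.continuousOn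
  obtain ⟨x₁, -, hmax'⟩ := isCompact_univ.exists_isMaxOn Set.univ_nonempty hgcont.continuousOn
  have hmin : ∀ c, g x₀ ≤ g c := fun c => isMinOn_iff.mp hmin' c trivial
  have hmax : ∀ c, g c ≤ g x₁ := fun c => isMaxOn_iff.mp hmax' c trivial
  set R : ℝ := g x₁ / g x₀ with hRdef
  have hgx₀ := hgpos x₀
  have hR1 : 1 ≤ R := (one_le_div hgx₀).mpr (hmin x₁)
  have hmem1 : ∀ k : ℕ,
      (1:ℝ) ∈ {r : ℝ | ∃ a c : ℕ → S, (∀ i ≤ k, a i = c i) ∧ r = g a / g c} :=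
    fun k => ⟨x₀, x₀, fun _ _ => rfl, (div_self (hgpos x₀).ne').symm⟩
  have hub : ∀ k : ℕ, ∀ r ∈ {r : ℝ | ∃ a c : ℕ → S, (∀ i ≤ k, a i = c i) ∧ r = g a / g c},
      r ≤ R := by
    rintro k r ⟨a, c, hac, rfl⟩
    exact div_le_div₀ (hgpos x₁).le (hmax a) hgx₀ (hmin c)
  have hρ1 : ∀ k, 1 ≤ rhoVar g k := fun k => le_csSup ⟨R, hub k⟩ (hmem1 k)
  have hρR : ∀ k, rhoVar g k ≤ R := fun k => csSup_le ⟨1, hmem1 k⟩ (hub k)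
  have hratio : ∀ k (a c : ℕ → S), (∀ i ≤ k, a i = c i) → g a ≤ rhoVar g k * g c := by
    intro k a c h
    have h1 : g a / g c ≤ rhoVar g k := le_csSup ⟨R, hub k⟩ ⟨a, c, h, rfl⟩
    have h2 := hgpos c
    calc g a = (g a / g c) * g c := by field_simp
      _ ≤ rhoVar g k * g c := mul_le_mul_of_nonneg_right h1 h2.le
  refine ⟨R/4 + 1, by linarith, ?_⟩
  intro n hn
  have hn1 : 1 ≤ n := by omega
  have hBstep : Bsum b n = Bsum b (n-1) + b n := by
    have hj : n - 1 + 1 = n := by omega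
    calc Bsum b n = Bsum b (n-1+1) := by rw [hj]
      _ = Bsum b (n-1) + b (n-1+1) := Finset.sum_Icc_succ_top (by omega) b
      _ = Bsum b (n-1) + b n := by rw [hj]
  have hbn : 1 ≤ b n := hb n hn1
  have hM : Jhi b n ≤ 0 := by unfold Jhi; omega
  apply csSup_le
  · exact ⟨0, (fun _ => Classical.arbitrary S), (fun _ => Classical.arbitrary S),
      fun _ _ _ => rfl, by simp⟩
  rintro r ⟨x, y, hxy, rfl⟩
  have hxy' : ∀ i : ℤ, Jhi b n + 1 ≤ i → i ≤ 0 → x i = y i := by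
    intro i h1 h2
    exact hxy i (by unfold Jhi at h1; omega) h2
  have hm : Jlo b n = Jhi b n + 1 - (b n : ℤ) := by unfold Jlo Jhi; omega
  obtain ⟨sum1, haff⟩ := chain g hgpos hg.2.2 (fun k => rhoVar g k) hρ1 hratio
    (Jhi b n) hM x y hxy' (b n) (Jlo b n) hm
  set P : ({i : ℤ // i ∈ Finset.Icc (Jlo b n) (Jhi b n)} → S) → ℝ :=
    fun ζ => piCond g (Jlo b n) (Jhi b n) ζ x with hPdef
  set Q : ({i : ℤ // i ∈ Finset.Icc (Jlo b n) (Jhi b n)} → S) → ℝ :=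
    fun ζ => piCond g (Jlo b n) (Jhi b n) ζ y with hQdef
  have hP1 : ∑ ζ, P ζ = 1 := sum1 x
  have hQ1 : ∑ ζ, Q ζ = 1 := sum1 y
  have hPpos : ∀ ζ, 0 < P ζ := fun ζ => piCond_pos hgpos _ _ ζ x
  have hQpos : ∀ ζ, 0 < Q ζ := fun ζ => piCond_pos hgpos _ _ ζ y
  set mm : ℝ := ∑ ζ, min (P ζ) (Q ζ) with hmm
  set A : ℝ := ∑ ζ, Real.sqrt (P ζ * Q ζ) with hAdef
  set H : ℝ := ∑ i ∈ Finset.Icc (Jlo b n) (Jhi b n),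
    (Real.sqrt (rhoVar g (-i).toNat) - 1)^2 / 2 with hHdef
  have hr_eq : (1/2 : ℝ) * ∑ ζ, |P ζ - Q ζ| = 1 - mm := by
    have e1 : ∀ ζ, |P ζ - Q ζ| = (P ζ + Q ζ) - 2 * min (P ζ) (Q ζ) := by
      intro ζ
      rcases le_total (P ζ) (Q ζ) with h | h
      · rw [abs_of_nonpos (by linarith), min_eq_left h]; ring
      · rw [abs_of_nonneg (by linarith), min_eq_right h]; ring
    rw [Finset.sum_congr rfl fun ζ _ => e1 ζ, Finset.sum_sub_distrib,
      Finset.sum_add_distrib, hP1, hQ1, ← Finset.mul_sum, ← hmm]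
    ring
  have hmax_eq : ∑ ζ, max (P ζ) (Q ζ) = 2 - mm := by
    have e2 : ∀ ζ, max (P ζ) (Q ζ) = (P ζ + Q ζ) - min (P ζ) (Q ζ) := by
      intro ζ
      have := min_add_max (P ζ) (Q ζ); linarith
    rw [Finset.sum_congr rfl fun ζ _ => e2 ζ, Finset.sum_sub_distrib,
      Finset.sum_add_distrib, hP1, hQ1, ← hmm]
    ring
  have hA2 : A^2 ≤ mm * (2 - mm) := by
    have hterm : ∀ ζ, Real.sqrt (P ζ * Q ζ)
        = Real.sqrt (min (P ζ) (Q ζ)) * Real.sqrt (max (P ζ) (Q ζ)) := by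
      intro ζ
      rw [← min_mul_max (P ζ) (Q ζ), Real.sqrt_mul (le_min (hPpos ζ).le (hQpos ζ).le)]
    have hcs := Finset.sum_mul_sq_le_sq_mul_sq Finset.univ
      (fun ζ => Real.sqrt (min (P ζ) (Q ζ))) (fun ζ => Real.sqrt (max (P ζ) (Q ζ)))
    have hsq1 : ∀ ζ, Real.sqrt (min (P ζ) (Q ζ)) ^ 2 = min (P ζ) (Q ζ) :=
      fun ζ => Real.sq_sqrt (le_min (hPpos ζ).le (hQpos ζ).le)
    have hsq2 : ∀ ζ, Real.sqrt (max (P ζ) (Q ζ)) ^ 2 = max (P ζ) (Q ζ) :=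
      fun ζ => Real.sq_sqrt (le_max_of_le_left (hPpos ζ).le)
    calc A^2 = (∑ ζ, Real.sqrt (min (P ζ) (Q ζ)) * Real.sqrt (max (P ζ) (Q ζ)))^2 := by
          rw [hAdef, Finset.sum_congr rfl fun ζ _ => hterm ζ]
      _ ≤ (∑ ζ, Real.sqrt (min (P ζ) (Q ζ)) ^ 2) * ∑ ζ, Real.sqrt (max (P ζ) (Q ζ)) ^ 2 := hcs
      _ = mm * (2 - mm) := by
          rw [Finset.sum_congr rfl fun ζ _ => hsq1 ζ, Finset.sum_congr rfl fun ζ _ => hsq2 ζ,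
            hmax_eq, ← hmm]
  have hA1 : A ≤ 1 := aff_le_one P Q (fun ζ => (hPpos ζ).le) (fun ζ => (hQpos ζ).le) hP1 hQ1
  have hAl : 1 - H ≤ A := haff
  have h2H : (1 - mm)^2 ≤ 2 * H := by nlinarith [hA2, sq_nonneg (1 - A), hAl]
  have hH2 : 2 * H = ∑ j ∈ Finset.Icc (Bsum b (n-1)) (Bsum b n - 1),
      (Real.sqrt (rhoVar g j) - 1)^2 := by
    have : 2 * H = ∑ i ∈ Finset.Icc (Jlo b n) (Jhi b n),
        (Real.sqrt (rhoVar g (-i).toNat) - 1)^2 := by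
      rw [hHdef, Finset.mul_sum]
      exact Finset.sum_congr rfl fun i _ => by ring
    rw [this]
    refine Finset.sum_nbij' (fun a => (-a).toNat) (fun c => -(c:ℤ)) ?_ ?_ ?_ ?_ ?_
    · intro a ha
      simp only [Finset.mem_Icc, Jlo, Jhi] at ha ⊢
      omega
    · intro c hc
      simp only [Finset.mem_Icc, Jlo, Jhi] at hc ⊢
      omega
    · intro a ha
      simp only [Finset.mem_Icc, Jlo, Jhi] at ha ⊢
      omega
    · intro c hc
      simp only [Finset.mem_Icc, Jlo, Jhi] at hc ⊢
      omega
    · intro a _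
      rfl
  have hSig : ∑ j ∈ Finset.Icc (Bsum b (n-1)) (Bsum b n - 1), (Real.sqrt (rhoVar g j) - 1)^2
      ≤ ∑ i ∈ Finset.Icc (Bsum b (n-1)) (Bsum b n - 1),
        ((Real.log (rhoVar g i)) ^ 2 / 4 + (R/4 + 1) * (Real.log (rhoVar g i)) ^ 3) :=
    Finset.sum_le_sum fun j _ => sqrt_sub_one_sq_le (hρ1 j) (hρR j)
  have hr0 : 0 ≤ (1/2 : ℝ) * ∑ ζ, |P ζ - Q ζ| := by positivity
  have hfin : ((1/2 : ℝ) * ∑ ζ, |P ζ - Q ζ|)^2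
      ≤ ∑ i ∈ Finset.Icc (Bsum b (n-1)) (Bsum b n - 1),
        ((Real.log (rhoVar g i)) ^ 2 / 4 + (R/4 + 1) * (Real.log (rhoVar g i)) ^ 3) := by
    rw [hr_eq]
    calc (1 - mm)^2 ≤ 2 * H := h2H
      _ = _ := hH2
      _ ≤ _ := hSig
  calc (1/2 : ℝ) * ∑ ζ, |P ζ - Q ζ|
      = Real.sqrt (((1/2 : ℝ) * ∑ ζ, |P ζ - Q ζ|)^2) := (Real.sqrt_sq hr0).symm
    _ ≤ _ := Real.sqrt_le_sqrt hfin

end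
end

section
/- Let g ∈ 𝒢 be positive with ρ_{[0,n]}(g) < ∞, and let n ≥ 1. If x, y ∈ X₊ satisfy x_i = y_i for all 0 ≤ i ≤ n − 1, then ∑_{s∈S} |g(sx) − g(sy)| ≤ ρ_{[0,n]}(g) − 1. -/
open Filter Topology MeasureTheory

noncomputable section

/-- If `g ∈ 𝒢` is positive with `ρ_{[0,n]}(g) < ∞` (i.e. the defining set of ratios
is bounded above) and `x, y ∈ X₊` agree on the coordinates `0 ≤ i ≤ n - 1`, then
`∑_{s ∈ S} |g (s x) - g (s y)| ≤ ρ_{[0,n]}(g) - 1`. -/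
theorem sum_abs_sub_le_rho {S : Type*} [Fintype S] [MeasurableSpace S]
    (hS : 2 ≤ Fintype.card S)
    (g : (ℕ → S) → ℝ) (hg : MemG g) (hgpos : ∀ x, 0 < g x)
    (n : ℕ) (hn : 1 ≤ n)
    (hfin : BddAbove {r : ℝ | ∃ x y : ℕ → S, (∀ i ≤ n, x i = y i) ∧ r = g x / g y})
    (x y : ℕ → S) (hxy : ∀ i < n, x i = y i) :
    ∑ s : S, |g (cons s x) - g (cons s y)| ≤ rhoVar g n - 1 := by
  obtain ⟨hm, hnn, hsum⟩ := hg
  set ρ := rhoVar g n with hρ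
  have hmem : ∀ a b : ℕ → S, (∀ i ≤ n, a i = b i) → g a / g b ≤ ρ :=
    fun a b h => le_csSup hfin ⟨a, b, h, rfl⟩
  have hρ1 : 1 ≤ ρ := by
    have := hmem x x (fun i _ => rfl)
    rwa [div_self (hgpos x).ne'] at this
  have key : ∀ s : S, |g (cons s x) - g (cons s y)| ≤
      (ρ - 1) * min (g (cons s x)) (g (cons s y)) := by
    intro s
    have hagree : ∀ z w : ℕ → S, (∀ i < n, z i = w i) →
        ∀ i ≤ n, cons s z i = cons s w i := by
      intro z w h i hi
      cases i with
      | zero => rfl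
      | succ k => exact h k (Nat.lt_of_succ_le hi)
    have h1 : g (cons s x) ≤ ρ * g (cons s y) :=
      (div_le_iff₀ (hgpos _)).mp (hmem _ _ (hagree x y hxy))
    have h2 : g (cons s y) ≤ ρ * g (cons s x) :=
      (div_le_iff₀ (hgpos _)).mp (hmem _ _ (hagree y x (fun i hi => (hxy i hi).symm)))
    rcases le_total (g (cons s x)) (g (cons s y)) with h | h
    · rw [abs_sub_comm, abs_of_nonneg (by linarith), min_eq_left h]
      nlinarith
    · rw [abs_of_nonneg (by linarith), min_eq_right h]
      nlinarith
  calc ∑ s : S, |g (cons s x) - g (cons s y)|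
      ≤ ∑ s : S, (ρ - 1) * min (g (cons s x)) (g (cons s y)) :=
        Finset.sum_le_sum fun s _ => key s
    _ = (ρ - 1) * ∑ s : S, min (g (cons s x)) (g (cons s y)) := by
        rw [Finset.mul_sum]
    _ ≤ (ρ - 1) * ∑ s : S, g (cons s y) := by
        apply mul_le_mul_of_nonneg_left _ (by linarith)
        exact Finset.sum_le_sum fun s _ => min_le_right _ _
    _ = ρ - 1 := by rw [hsum y]; ring

end
end

section
/- Let g ∈ 𝒢 be positive and continuous. If lim_{n→∞} ∑_{i=⌈λ^{n−1}⌉}^{⌈λ^{n}⌉} (log ρ_{[0,i]}(g))² = 0 holds for some λ > 1, then lim_{n→∞} ∑_{i=⌈λ'^{n−1}⌉}^{⌈λ'^{n}⌉} (log ρ_{[0,i]}(g))² = 0 holds for every λ' > 1. -/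
open Filter Topology MeasureTheory

noncomputable section


private lemma sum_union_le_nonneg {f : ℕ → ℝ} (hf : ∀ i, 0 ≤ f i) (A B : Finset ℕ) :
    ∑ i ∈ A ∪ B, f i ≤ ∑ i ∈ A, f i + ∑ i ∈ B, f i := by
  have h := Finset.sum_union_inter (s₁ := A) (s₂ := B) (f := f)
  have h2 : 0 ≤ ∑ i ∈ A ∩ B, f i := Finset.sum_nonneg fun i _ => hf i
  linarith

private lemma sum_biUnion_le_nonneg {f : ℕ → ℝ} (hf : ∀ i, 0 ≤ f i)
    (s : Finset ℕ) (t : ℕ → Finset ℕ) :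
    ∑ i ∈ s.biUnion t, f i ≤ ∑ n ∈ s, ∑ i ∈ t n, f i := by
  induction s using Finset.induction with
  | empty => simp
  | insert c s' ha ih =>
      rw [Finset.biUnion_insert, Finset.sum_insert ha]
      exact (sum_union_le_nonneg hf _ _).trans (by linarith)

private lemma key (a : ℕ → ℝ) (ha : ∀ i, 0 ≤ a i) (lam : ℝ) (hlam : 1 < lam)
    (h : Tendsto (fun n : ℕ => ∑ i ∈ Finset.Icc ⌈lam ^ (n - 1)⌉₊ ⌈lam ^ n⌉₊, a i) atTop (𝓝 0))
    (lam' : ℝ) (hlam' : 1 < lam') :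
    Tendsto (fun n : ℕ => ∑ i ∈ Finset.Icc ⌈lam' ^ (n - 1)⌉₊ ⌈lam' ^ n⌉₊, a i) atTop (𝓝 0) := by
  have hlampos : (0:ℝ) < lam := lt_trans one_pos hlam
  set b : ℕ → ℕ := fun n => ⌈lam ^ n⌉₊ with hb
  have hbmono : Monotone b := fun m n hmn =>
    Nat.ceil_le_ceil (pow_le_pow_right₀ hlam.le hmn)
  have hbge : ∀ n, (lam ^ n : ℝ) ≤ b n := fun n => Nat.le_ceil _
  have hble : ∀ n, (b n : ℝ) ≤ lam ^ n + 1 := fun n =>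
    le_of_lt (Nat.ceil_lt_add_one (by positivity))
  have hexists : ∀ i : ℕ, ∃ n, i ≤ b n := by
    intro i
    obtain ⟨n, hn⟩ := pow_unbounded_of_one_lt (i:ℝ) hlam
    exact ⟨n, by exact_mod_cast hn.le.trans (Nat.le_ceil _)⟩
  set nf : ℕ → ℕ := fun i => Nat.find (hexists i) with hnf
  have hub : ∀ i, i ≤ b (nf i) := fun i => Nat.find_spec (hexists i)
  have hmin : ∀ i n, i ≤ b n → nf i ≤ n := fun i n hn => Nat.find_le hn
  have hnfmono : ∀ i j, i ≤ j → nf i ≤ nf j := fun i j hij =>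
    hmin i _ (hij.trans (hub j))
  have hlb : ∀ i, 1 ≤ i → b (nf i - 1) ≤ i := by
    intro i hi
    rcases Nat.eq_zero_or_pos (nf i) with h0 | hpos
    · rw [h0]
      simpa [hb] using hi
    · have hlt : nf i - 1 < nf i := Nat.sub_lt hpos one_pos
      have := Nat.find_min (hexists i) hlt
      omega
  -- choose K with 2*(lam'+1) ≤ lam^K
  obtain ⟨K, hK⟩ := pow_unbounded_of_one_lt (2 * (lam' + 1)) hlam
  have hlam'pos : (0:ℝ) < lam' := lt_trans one_pos hlam'
  -- claim D
  have hD : ∀ A B : ℕ, 1 ≤ A → (B:ℝ) ≤ lam' * A + 1 → nf B ≤ nf A + K := by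
    intro A B hA hAB
    apply hmin
    have h1 : (A:ℝ) ≤ b (nf A) := by exact_mod_cast hub A
    have h2 : (b (nf A) : ℝ) ≤ lam ^ (nf A) + 1 := hble _
    have h3 : (1:ℝ) ≤ lam ^ (nf A) := one_le_pow₀ hlam.le
    have h4 : (B:ℝ) ≤ lam ^ (nf A + K) := by
      rw [pow_add]
      have hA1 : (1:ℝ) ≤ (A:ℝ) := by exact_mod_cast hA
      nlinarith [hlam'pos.le, pow_pos hlampos (nf A)]
    exact_mod_cast h4.trans (hbge _)
  rw [Metric.tendsto_atTop] at h ⊢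
  intro ε hε
  set ε' := ε / (2 * ((K:ℝ) + 1)) with hε'
  have hε'pos : 0 < ε' := by positivity
  obtain ⟨N₁, hN₁⟩ := h ε' hε'pos
  have htend : Tendsto (fun m : ℕ => lam' ^ (m - 1)) atTop atTop :=
    (tendsto_pow_atTop_atTop_of_one_lt hlam').comp (tendsto_sub_atTop_nat 1)
  obtain ⟨M, hM⟩ := Filter.eventually_atTop.mp (htend.eventually_gt_atTop (b N₁ : ℝ))
  refine ⟨max M 1, fun m hm => ?_⟩
  have hm1 : 1 ≤ m := le_trans (le_max_right _ _) hm
  have hMm : (b N₁ : ℝ) < lam' ^ (m - 1) := hM m (le_trans (le_max_left _ _) hm)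
  set A := ⌈lam' ^ (m - 1)⌉₊ with hA
  set B := ⌈lam' ^ m⌉₊ with hB
  have hA1 : 1 ≤ A := Nat.one_le_ceil_iff.2 (by positivity)
  have hAreal : (lam' ^ (m-1) : ℝ) ≤ A := Nat.le_ceil _
  have hAB : (B:ℝ) ≤ lam' * A + 1 := by
    have h1 : (B:ℝ) < lam' ^ m + 1 := Nat.ceil_lt_add_one (by positivity)
    have h2 : lam' ^ m = lam' * lam' ^ (m-1) := by
      conv_lhs => rw [← Nat.sub_add_cancel hm1]
      ring
    nlinarith [hlam'pos]
  have hbA : b N₁ < A := by exact_mod_cast lt_of_lt_of_le hMm hAreal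
  have hNA : N₁ ≤ nf A := by
    by_contra hcon
    push_neg at hcon
    have := (hub A).trans (hbmono hcon.le)
    omega
  have hsub : Finset.Icc A B ⊆ (Finset.Icc (nf A) (nf B)).biUnion
      (fun n => Finset.Icc (b (n-1)) (b n)) := by
    intro i hi
    rw [Finset.mem_Icc] at hi
    refine Finset.mem_biUnion.2 ⟨nf i, ?_, ?_⟩
    · exact Finset.mem_Icc.2 ⟨hnfmono _ _ hi.1, hnfmono _ _ hi.2⟩
    · exact Finset.mem_Icc.2 ⟨hlb i (le_trans hA1 hi.1), hub i⟩
  have hcover : ∑ i ∈ Finset.Icc A B, a i ≤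
      ∑ n ∈ Finset.Icc (nf A) (nf B), ∑ i ∈ Finset.Icc (b (n-1)) (b n), a i :=
    (Finset.sum_le_sum_of_subset_of_nonneg hsub (fun i _ _ => ha i)).trans
      (sum_biUnion_le_nonneg ha _ _)
  have hblock : ∀ n ∈ Finset.Icc (nf A) (nf B),
      ∑ i ∈ Finset.Icc (b (n-1)) (b n), a i ≤ ε' := by
    intro n hn
    rw [Finset.mem_Icc] at hn
    have h5 := hN₁ n (le_trans hNA hn.1)
    rw [Real.dist_eq, sub_zero] at h5
    exact (le_abs_self _).trans h5.le
  have hcard : ((Finset.Icc (nf A) (nf B)).card : ℝ) ≤ (K:ℝ) + 1 := by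
    rw [Nat.card_Icc]
    have h6 := hD A B hA1 hAB
    have h7 : nf B + 1 - nf A ≤ K + 1 := by omega
    exact_mod_cast h7
  have hsum : ∑ n ∈ Finset.Icc (nf A) (nf B),
      ∑ i ∈ Finset.Icc (b (n-1)) (b n), a i ≤ ((K:ℝ)+1) * ε' := by
    calc ∑ n ∈ Finset.Icc (nf A) (nf B), ∑ i ∈ Finset.Icc (b (n-1)) (b n), a i
        ≤ ((Finset.Icc (nf A) (nf B)).card : ℝ) * ε' := by
          simpa using Finset.sum_le_card_nsmul _ _ ε' hblock
      _ ≤ ((K:ℝ)+1) * ε' := by nlinarith [hε'pos]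
  rw [Real.dist_eq, sub_zero, abs_of_nonneg (Finset.sum_nonneg fun i _ => ha i)]
  have heq : ((K:ℝ)+1) * ε' = ε / 2 := by
    rw [hε']
    field_simp
  linarith [hcover, hsum]


/-- If `g ∈ 𝒢` is positive and continuous and
`∑_{i=⌈λ^{n-1}⌉}^{⌈λ^n⌉} (log ρ_{[0,i]}(g))² → 0` for some `λ > 1`, then the same
holds for every `λ' > 1`. -/
theorem log_rho_sq_cond_indep_of_lambda {S : Type*} [Fintype S] [DecidableEq S]
    [MeasurableSpace S] [TopologicalSpace S] [DiscreteTopology S] [BorelSpace S]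
    (hS : 2 ≤ Fintype.card S)
    (g : (ℕ → S) → ℝ) (hg : MemG g) (hgpos : ∀ x, 0 < g x) (hgcont : Continuous g)
    (hyp : ∃ lam : ℝ, 1 < lam ∧ Tendsto (fun n : ℕ =>
      ∑ i ∈ Finset.Icc ⌈lam ^ (n - 1)⌉₊ ⌈lam ^ n⌉₊,
        (Real.log (rhoVar g i)) ^ 2) atTop (𝓝 0)) :
    ∀ lam' : ℝ, 1 < lam' → Tendsto (fun n : ℕ =>
      ∑ i ∈ Finset.Icc ⌈lam' ^ (n - 1)⌉₊ ⌈lam' ^ n⌉₊,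
        (Real.log (rhoVar g i)) ^ 2) atTop (𝓝 0) := by
  obtain ⟨lam, hlam, h⟩ := hyp
  exact fun lam' hlam' =>
    key (fun i => (Real.log (rhoVar g i)) ^ 2) (fun i => sq_nonneg _) lam hlam h lam' hlam'

end
end
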